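/- arXiv:2201.13375 — 3 statements merged into one kernel-verified Lean document; each statement's English description precedes it below -/
import Mathlib

section
/- Let n ≥ 2 and let A ∈ ℝ^{n×n} be Metzler, invertible, and output unstable (its leading principal (n−1)×(n−1) submatrix A₁₁ is Hurwitz stable and A_{nn} > 0). Let b₀ ∈ ℝⁿ with b₀ ≥ 0 entrywise, let μ, θ > 0 with r := μ/θ, define g₀ := −eₙᵀA⁻¹b₀ and g_n := −eₙᵀA⁻¹eₙ, and assume g₀ < 0. Set u* := (g₀ − r)/(g_n r) and Ā := A − u* eₙeₙᵀ. Then for all η > 0 and all k_p > 0, the (n+2)×(n+2) matrix [[Ā, 0, −k_p r eₙ], [0, −η u*, −μ k_p/u*], [eₙᵀ, −η u*, −μ k_p/u*]] is Hurwitz stable. -/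
set_option linter.unusedSectionVars false
set_option maxHeartbeats 2000000

open Matrix

/-- A real square matrix is Metzler if all its off-diagonal entries are nonnegative. -/
def Metzler {m : Type*} [Fintype m] (M : Matrix m m ℝ) : Prop :=
  ∀ i j, i ≠ j → 0 ≤ M i j

/-- A real square matrix is Hurwitz stable if all its (complex) eigenvalues have
negative real part. -/
def HurwitzStable {m : Type*} [Fintype m] [DecidableEq m] (M : Matrix m m ℝ) : Prop :=
  ∀ z ∈ spectrum ℂ (M.map Complex.ofReal), z.re < 0

namespace Stmt15Aux

variable {ι : Type*} [Fintype ι] [DecidableEq ι]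

section Dom

variable {𝕜 : Type*} [RCLike 𝕜]

lemma dom_mul (M M' : Matrix ι ι 𝕜) (N N' : Matrix ι ι ℝ)
    (h : ∀ i j, ‖M i j‖ ≤ N i j) (h' : ∀ i j, ‖M' i j‖ ≤ N' i j) :
    ∀ i j, ‖(M * M') i j‖ ≤ (N * N') i j := by
  intro i j
  rw [Matrix.mul_apply, Matrix.mul_apply]
  calc ‖∑ k, M i k * M' k j‖ ≤ ∑ k, ‖M i k * M' k j‖ := norm_sum_le _ _
    _ ≤ ∑ k, N i k * N' k j := by
        refine Finset.sum_le_sum fun k _ => ?_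
        rw [norm_mul]
        exact mul_le_mul (h i k) (h' k j) (norm_nonneg _) ((norm_nonneg _).trans (h i k))

lemma dom_pow (M : Matrix ι ι 𝕜) (N : Matrix ι ι ℝ)
    (h : ∀ i j, ‖M i j‖ ≤ N i j) : ∀ k i j, ‖(M ^ k) i j‖ ≤ (N ^ k) i j := by
  intro k
  induction k with
  | zero =>
      intro i j
      simp only [pow_zero, Matrix.one_apply]
      split_ifs <;> simp
  | succ k ih =>
      intro i j
      rw [pow_succ, pow_succ]
      exact dom_mul _ _ _ _ ih h i j

lemma pow_nonneg' (N : Matrix ι ι ℝ) (hN : ∀ i j, 0 ≤ N i j) :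
    ∀ k i j, 0 ≤ (N ^ k) i j := by
  intro k
  induction k with
  | zero => intro i j; simp only [pow_zero, Matrix.one_apply]; split_ifs <;> norm_num
  | succ k ih =>
      intro i j
      rw [pow_succ, Matrix.mul_apply]
      exact Finset.sum_nonneg fun l _ => mul_nonneg (ih i l) (hN l j)

lemma row_pow (N : Matrix ι ι ℝ) (v : ι → ℝ) (a : ℝ)
    (hN : ∀ i j, 0 ≤ N i j) (hv : ∀ i, 0 < v i)
    (hrow : ∀ i, ∑ j, N i j * v j ≤ a * v i) (ha0 : 0 ≤ a) :
    ∀ k i, ∑ j, (N ^ k) i j * v j ≤ a ^ k * v i := by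
  intro k
  induction k with
  | zero =>
      intro i
      simp only [pow_zero, Matrix.one_apply]
      rw [Finset.sum_eq_single i]
      · simp
      · intro b _ hb; simp [Ne.symm hb]
      · simp
  | succ k ih =>
      intro i
      rw [pow_succ']
      have e1 : ∀ j, (N * N ^ k) i j * v j = ∑ l, N i l * ((N ^ k) l j * v j) := by
        intro j
        rw [Matrix.mul_apply, Finset.sum_mul]
        simp_rw [mul_assoc]
      calc ∑ j, (N * N ^ k) i j * v j
          = ∑ j, ∑ l, N i l * ((N ^ k) l j * v j) := Finset.sum_congr rfl fun j _ => e1 j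
        _ = ∑ l, ∑ j, N i l * ((N ^ k) l j * v j) := Finset.sum_comm
        _ = ∑ l, N i l * (∑ j, (N ^ k) l j * v j) := by
            refine Finset.sum_congr rfl fun l _ => ?_
            rw [Finset.mul_sum]
        _ ≤ ∑ l, N i l * (a ^ k * v l) :=
            Finset.sum_le_sum fun l _ => mul_le_mul_of_nonneg_left (ih l) (hN i l)
        _ = a ^ k * ∑ l, N i l * v l := by
            rw [Finset.mul_sum]; exact Finset.sum_congr rfl fun l _ => by ring
        _ ≤ a ^ k * (a * v i) := mul_le_mul_of_nonneg_left (hrow i) (pow_nonneg ha0 k)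
        _ = a ^ (k + 1) * v i := by ring

lemma pow_entry_bound (N : Matrix ι ι ℝ) (v : ι → ℝ) (a : ℝ)
    (hN : ∀ i j, 0 ≤ N i j) (hv : ∀ i, 0 < v i)
    (hrow : ∀ i, ∑ j, N i j * v j ≤ a * v i) (ha0 : 0 ≤ a) :
    ∀ k i j, (N ^ k) i j ≤ a ^ k * v i / v j := by
  intro k i j
  have h1 : (N ^ k) i j * v j ≤ a ^ k * v i := by
    calc (N ^ k) i j * v j ≤ ∑ l, (N ^ k) i l * v l := by
          refine Finset.single_le_sum (f := fun l => (N ^ k) i l * v l) ?_ (Finset.mem_univ j)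
          intro l _
          exact mul_nonneg (pow_nonneg' N hN k i l) (hv l).le
      _ ≤ a ^ k * v i := row_pow N v a hN hv hrow ha0 k i
  rw [le_div_iff₀ (hv j)]
  exact h1

lemma summable_pow_entry (M : Matrix ι ι 𝕜) (N : Matrix ι ι ℝ) (v : ι → ℝ) (a : ℝ)
    (hd : ∀ i j, ‖M i j‖ ≤ N i j) (hv : ∀ i, 0 < v i)
    (hrow : ∀ i, ∑ j, N i j * v j ≤ a * v i) (ha0 : 0 ≤ a) (ha : a < 1) :
    ∀ i j, Summable fun k => ‖(M ^ k) i j‖ := by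
  have hN : ∀ i j, 0 ≤ N i j := fun i j => (norm_nonneg _).trans (hd i j)
  intro i j
  refine Summable.of_nonneg_of_le (fun k => norm_nonneg _) (fun k => ?_)
    (((summable_geometric_of_lt_one ha0 ha).mul_right (v i / v j)))
  calc ‖(M ^ k) i j‖ ≤ (N ^ k) i j := dom_pow M N hd k i j
    _ ≤ a ^ k * v i / v j := pow_entry_bound N v a hN hv hrow ha0 k i j
    _ = a ^ k * (v i / v j) := by ring

lemma tsum_telescope' {f : ℕ → 𝕜} (hf : Summable f) : ∑' k : ℕ, (f k - f (k + 1)) = f 0 := by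
  have h2 : Summable fun k : ℕ => f (k + 1) := (summable_nat_add_iff 1).mpr hf
  rw [Summable.tsum_sub hf h2, Summable.tsum_eq_zero_add hf]
  ring

/-- Neumann series inverse for `1 - M`. -/
lemma neumann (M : Matrix ι ι 𝕜) (N : Matrix ι ι ℝ) (v : ι → ℝ) (a : ℝ)
    (hd : ∀ i j, ‖M i j‖ ≤ N i j) (hv : ∀ i, 0 < v i)
    (hrow : ∀ i, ∑ j, N i j * v j ≤ a * v i) (ha0 : 0 ≤ a) (ha : a < 1) :
    (1 - M) * Matrix.of (fun i j => ∑' k : ℕ, (M ^ k) i j) = 1 ∧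
    Matrix.of (fun i j => ∑' k : ℕ, (M ^ k) i j) * (1 - M) = 1 := by
  have hsum : ∀ i j, Summable fun k : ℕ => (M ^ k) i j := fun i j =>
    (summable_pow_entry M N v a hd hv hrow ha0 ha i j).of_norm
  constructor
  · ext i j
    rw [Matrix.mul_apply]
    have e1 : ∀ l, (1 - M) i l * (∑' k : ℕ, (M ^ k) l j)
        = ∑' k : ℕ, (1 - M) i l * (M ^ k) l j := fun l => tsum_mul_left.symm
    simp only [Matrix.of_apply]
    simp only [e1]
    rw [← Summable.tsum_finsetSum (fun l _ => (hsum l j).mul_left _)]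
    have e2 : ∀ k : ℕ, ∑ l, (1 - M) i l * (M ^ k) l j
        = (M ^ k) i j - (M ^ (k + 1)) i j := by
      intro k
      rw [← Matrix.mul_apply]
      have : (1 - M) * M ^ k = M ^ k - M ^ (k + 1) := by
        rw [sub_mul, one_mul, pow_succ']
      rw [this, Matrix.sub_apply]
    simp only [e2]
    rw [tsum_telescope' (hsum i j)]
    simp [Matrix.one_apply]
  · ext i j
    rw [Matrix.mul_apply]
    have e1 : ∀ l, (∑' k : ℕ, (M ^ k) i l) * (1 - M) l j
        = ∑' k : ℕ, (M ^ k) i l * (1 - M) l j := fun l => tsum_mul_right.symm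
    simp only [Matrix.of_apply]
    simp only [e1]
    rw [← Summable.tsum_finsetSum (fun l _ => (hsum i l).mul_right _)]
    have e2 : ∀ k : ℕ, ∑ l, (M ^ k) i l * (1 - M) l j
        = (M ^ k) i j - (M ^ (k + 1)) i j := by
      intro k
      rw [← Matrix.mul_apply]
      have : (M ^ k) * (1 - M) = M ^ k - M ^ (k + 1) := by
        rw [mul_sub, mul_one, pow_succ]
      rw [this, Matrix.sub_apply]
    simp only [e2]
    rw [tsum_telescope' (hsum i j)]
    simp [Matrix.one_apply]

lemma neumann_dom (M : Matrix ι ι 𝕜) (N : Matrix ι ι ℝ) (v : ι → ℝ) (a : ℝ)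
    (hd : ∀ i j, ‖M i j‖ ≤ N i j) (hv : ∀ i, 0 < v i)
    (hrow : ∀ i, ∑ j, N i j * v j ≤ a * v i) (ha0 : 0 ≤ a) (ha : a < 1) :
    ∀ i j, ‖∑' k : ℕ, (M ^ k) i j‖ ≤ ∑' k : ℕ, (N ^ k) i j := by
  have hN : ∀ i j, 0 ≤ N i j := fun i j => (norm_nonneg _).trans (hd i j)
  have hdN : ∀ i j, ‖N i j‖ ≤ N i j := fun i j => le_of_eq (Real.norm_of_nonneg (hN i j))
  intro i j
  have h1 : ‖∑' k : ℕ, (M ^ k) i j‖ ≤ ∑' k : ℕ, ‖(M ^ k) i j‖ :=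
    norm_tsum_le_tsum_norm (summable_pow_entry M N v a hd hv hrow ha0 ha i j)
  refine h1.trans (Summable.tsum_le_tsum (fun k => dom_pow M N hd k i j)
    (summable_pow_entry M N v a hd hv hrow ha0 ha i j) ?_)
  have := summable_pow_entry (𝕜 := ℝ) N N v a hdN hv hrow ha0 ha i j
  simpa only [Real.norm_of_nonneg (pow_nonneg' N hN _ i j)] using this

end Dom


section Resolvent

variable (B : Matrix ι ι ℝ)

/-- the real resolvent -/
noncomputable def Rm (σ : ℝ) : Matrix ι ι ℝ := (σ • (1 : Matrix ι ι ℝ) - B)⁻¹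

lemma res_nonneg (hoff : ∀ i j, i ≠ j → 0 ≤ B i j)
    (hdet : ∀ σ : ℝ, 0 ≤ σ → IsUnit (σ • (1 : Matrix ι ι ℝ) - B).det) :
    ∀ σ : ℝ, 0 ≤ σ → ∀ i j, 0 ≤ Rm B σ i j := by
  classical
  set c : ℝ := 1 + ∑ i, |B i i| with hc_def
  have hc1 : 1 ≤ c := by
    have : (0:ℝ) ≤ ∑ i, |B i i| := Finset.sum_nonneg fun i _ => abs_nonneg _
    simp only [hc_def]; linarith
  have hcB : ∀ i : ι, 0 ≤ B i i + c := by
    intro i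
    have h1 : |B i i| ≤ ∑ i, |B i i| :=
      Finset.single_le_sum (f := fun i => |B i i|) (fun i _ => abs_nonneg _) (Finset.mem_univ i)
    have := neg_abs_le (B i i)
    simp only [hc_def]
    linarith
  set P : Matrix ι ι ℝ := B + c • 1 with hP_def
  have hP : ∀ i j, 0 ≤ P i j := by
    intro i j
    by_cases h : i = j
    · subst h
      simp only [hP_def, Matrix.add_apply, Matrix.smul_apply, Matrix.one_apply_eq, smul_eq_mul,
        mul_one]
      linarith [hcB i]
    · simp only [hP_def, Matrix.add_apply, Matrix.smul_apply, Matrix.one_apply_ne h, smul_eq_mul,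
        mul_zero, add_zero]
      exact hoff i j h
  have hfact : ∀ σ : ℝ, 0 ≤ σ →
      σ • (1 : Matrix ι ι ℝ) - B = (σ + c) • ((1 : Matrix ι ι ℝ) - (σ + c)⁻¹ • P) := by
    intro σ hσ
    have hne : σ + c ≠ 0 := by intro h; linarith [hσ, hc1]
    rw [smul_sub, smul_smul, mul_inv_cancel₀ hne, one_smul, hP_def, add_smul]
    abel
  set s1 : ℝ := ∑ i, ∑ j, P i j with hs1_def
  have hs1 : 0 ≤ s1 :=
    Finset.sum_nonneg fun i _ => Finset.sum_nonneg fun j _ => hP i j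
  have hrowP : ∀ i, ∑ j, P i j ≤ s1 := by
    intro i
    refine Finset.single_le_sum (f := fun i => ∑ j, P i j) (fun i _ => ?_) (Finset.mem_univ i)
    exact Finset.sum_nonneg fun j _ => hP i j
  -- base case
  have base : ∀ σ : ℝ, s1 ≤ σ → ∀ i j, 0 ≤ Rm B σ i j := by
    intro σ hσ i j
    have hσ0 : 0 ≤ σ := le_trans hs1 hσ
    have hσc : 0 < σ + c := by linarith
    set M : Matrix ι ι ℝ := (σ + c)⁻¹ • P with hM_def
    have hM : ∀ i j, 0 ≤ M i j := fun i j => by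
      simp only [hM_def, Matrix.smul_apply, smul_eq_mul]
      exact mul_nonneg (by positivity) (hP i j)
    have hd : ∀ i j, ‖M i j‖ ≤ M i j := fun i j => le_of_eq (Real.norm_of_nonneg (hM i j))
    have hrow : ∀ i, ∑ j, M i j * (fun _ : ι => (1:ℝ)) j ≤ (s1 / (σ + c)) * (fun _ : ι => (1:ℝ)) i := by
      intro i
      simp only [mul_one]
      have h2 : ∑ j, M i j = (σ + c)⁻¹ * ∑ j, P i j := by
        simp only [hM_def, Matrix.smul_apply, smul_eq_mul, Finset.mul_sum]
      rw [h2, div_eq_inv_mul]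
      exact mul_le_mul_of_nonneg_left (hrowP i) (by positivity)
    have ha0 : 0 ≤ s1 / (σ + c) := by positivity
    have ha : s1 / (σ + c) < 1 := by
      rw [div_lt_one hσc]; linarith
    obtain ⟨h1, _⟩ := neumann M M (fun _ => 1) (s1 / (σ + c)) hd (fun _ => one_pos) hrow ha0 ha
    have hrinv : (σ • (1 : Matrix ι ι ℝ) - B) *
        ((σ + c)⁻¹ • Matrix.of (fun i j => ∑' k : ℕ, (M ^ k) i j)) = 1 := by
      rw [hfact σ hσ0, Matrix.smul_mul, Matrix.mul_smul, smul_smul,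
        mul_inv_cancel₀ (ne_of_gt hσc), one_smul, h1]
    rw [Rm, Matrix.inv_eq_right_inv hrinv]
    simp only [Matrix.smul_apply, Matrix.of_apply, smul_eq_mul]
    refine mul_nonneg (by positivity) (tsum_nonneg fun k => pow_nonneg' M hM k i j)
  -- step
  have step : ∀ σ τ : ℝ, 0 ≤ σ → σ ≤ τ → (∀ i j, 0 ≤ Rm B τ i j) →
      (τ - σ) * (∑ i, ∑ j, Rm B τ i j) < 1 → ∀ i j, 0 ≤ Rm B σ i j := by
    intro σ τ hσ hστ hRτ hsmall i j
    have hτ : 0 ≤ τ := le_trans hσ hστ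
    set M : Matrix ι ι ℝ := (τ - σ) • Rm B τ with hM_def
    have hM : ∀ i j, 0 ≤ M i j := fun i j => by
      simp only [hM_def, Matrix.smul_apply, smul_eq_mul]
      exact mul_nonneg (by linarith) (hRτ i j)
    have hd : ∀ i j, ‖M i j‖ ≤ M i j := fun i j => le_of_eq (Real.norm_of_nonneg (hM i j))
    set a : ℝ := (τ - σ) * (∑ i, ∑ j, Rm B τ i j) with ha_def
    have ha0 : 0 ≤ a := by
      refine mul_nonneg (by linarith) ?_
      exact Finset.sum_nonneg fun i _ => Finset.sum_nonneg fun j _ => hRτ i j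
    have hrow : ∀ i, ∑ j, M i j * (fun _ : ι => (1:ℝ)) j ≤ a * (fun _ : ι => (1:ℝ)) i := by
      intro i
      simp only [mul_one]
      have h1 : ∑ j, M i j = (τ - σ) * ∑ j, Rm B τ i j := by
        simp only [hM_def, Matrix.smul_apply, smul_eq_mul, Finset.mul_sum]
      rw [h1, ha_def]
      refine mul_le_mul_of_nonneg_left ?_ (by linarith)
      refine Finset.single_le_sum (f := fun i => ∑ j, Rm B τ i j) (fun i _ => ?_) (Finset.mem_univ i)
      exact Finset.sum_nonneg fun j _ => hRτ i j
    obtain ⟨h1, _⟩ := neumann M M (fun _ => 1) a hd (fun _ => one_pos) hrow ha0 hsmall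
    -- (1 - M) * (τ•1 - B) = σ•1 - B
    have hkey : ((1 : Matrix ι ι ℝ) - M) * (τ • (1 : Matrix ι ι ℝ) - B)
        = σ • (1 : Matrix ι ι ℝ) - B := by
      rw [Matrix.sub_mul, Matrix.one_mul, hM_def, Matrix.smul_mul]
      rw [Rm, Matrix.nonsing_inv_mul _ (hdet τ hτ), sub_smul]
      abel
    have hrinv : (σ • (1 : Matrix ι ι ℝ) - B) *
        (Rm B τ * Matrix.of (fun i j => ∑' k : ℕ, (M ^ k) i j)) = 1 := by
      rw [← hkey, Matrix.mul_assoc, ← Matrix.mul_assoc (τ • (1 : Matrix ι ι ℝ) - B), Rm,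
        Matrix.mul_nonsing_inv _ (hdet τ hτ), Matrix.one_mul, h1]
    rw [Rm, Matrix.inv_eq_right_inv hrinv, Matrix.mul_apply]
    refine Finset.sum_nonneg fun l _ => mul_nonneg (hRτ i l) ?_
    simp only [Matrix.of_apply]
    exact tsum_nonneg fun k => pow_nonneg' M hM k l j
  -- continuity bound
  have hcont : ContinuousOn (fun τ : ℝ => ∑ i, ∑ j, |Rm B τ i j|) (Set.Icc 0 (s1 + 1)) := by
    have hA : Continuous fun τ : ℝ => τ • (1 : Matrix ι ι ℝ) - B :=
      (continuous_id.smul continuous_const).sub continuous_const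
    have hdetC : Continuous fun τ : ℝ => (τ • (1 : Matrix ι ι ℝ) - B).det := hA.matrix_det
    have hadjC : Continuous fun τ : ℝ => (τ • (1 : Matrix ι ι ℝ) - B).adjugate := hA.matrix_adjugate
    have hne : ∀ τ ∈ Set.Icc (0:ℝ) (s1 + 1), (τ • (1 : Matrix ι ι ℝ) - B).det ≠ 0 := by
      intro τ hτ
      exact (hdet τ hτ.1).ne_zero
    refine continuousOn_finset_sum _ fun i _ => continuousOn_finset_sum _ fun j _ => ?_
    have heq : (fun τ : ℝ => Rm B τ i j)
        = fun τ : ℝ => ((τ • (1 : Matrix ι ι ℝ) - B).det)⁻¹ * (τ • (1 : Matrix ι ι ℝ) - B).adjugate i j := by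
      funext τ
      rw [Rm, Matrix.inv_def, Matrix.smul_apply, smul_eq_mul, Ring.inverse_eq_inv']
    have : ContinuousOn (fun τ : ℝ => Rm B τ i j) (Set.Icc 0 (s1 + 1)) := by
      rw [heq]
      refine ContinuousOn.mul (ContinuousOn.inv₀ hdetC.continuousOn hne) ?_
      exact ((continuous_apply j).comp ((continuous_apply i).comp hadjC)).continuousOn
    exact this.abs
  obtain ⟨C0, hC0⟩ := (isCompact_Icc (a := (0:ℝ)) (b := s1 + 1)).exists_bound_of_continuousOn hcont
  set C : ℝ := max C0 0 with hC_def
  have hC : 0 ≤ C := le_max_right _ _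
  have hCb : ∀ τ ∈ Set.Icc (0:ℝ) (s1 + 1), ∑ i, ∑ j, |Rm B τ i j| ≤ C := by
    intro τ hτ
    refine le_trans (le_abs_self _) (le_trans ?_ (le_max_left _ _))
    simpa [Real.norm_eq_abs] using hC0 τ hτ
  set δ : ℝ := (2 * (C + 1))⁻¹ with hδ_def
  have hδpos : 0 < δ := by rw [hδ_def]; positivity
  have hδ1 : δ ≤ 1 := by
    rw [hδ_def]
    rw [inv_le_one_iff₀]
    right; linarith
  have hδC : δ * C < 1 := by
    rw [hδ_def]
    rw [inv_mul_lt_iff₀ (by linarith)]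
    linarith
  -- downward induction
  have claim : ∀ k : ℕ, ∀ σ : ℝ, 0 ≤ σ → s1 ≤ σ + k * δ → ∀ i j, 0 ≤ Rm B σ i j := by
    intro k
    induction k with
    | zero =>
        intro σ hσ hk
        refine base σ ?_
        simpa using hk
    | succ k ih =>
        intro σ hσ hk
        by_cases hbig : s1 ≤ σ
        · exact base σ hbig
        · push_neg at hbig
          have hτ0 : 0 ≤ σ + δ := by linarith
          have hτk : s1 ≤ (σ + δ) + k * δ := by
            push_cast at hk ⊢
            linarith
          have hRτ := ih (σ + δ) hτ0 hτk
          have hmem : σ + δ ∈ Set.Icc (0:ℝ) (s1 + 1) := ⟨hτ0, by linarith⟩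
          have hsum_eq : ∑ i, ∑ j, Rm B (σ + δ) i j = ∑ i, ∑ j, |Rm B (σ + δ) i j| := by
            refine Finset.sum_congr rfl fun i _ => Finset.sum_congr rfl fun j _ => ?_
            rw [abs_of_nonneg (hRτ i j)]
          have hsmall : ((σ + δ) - σ) * (∑ i, ∑ j, Rm B (σ + δ) i j) < 1 := by
            rw [hsum_eq]
            have h1 : ∑ i, ∑ j, |Rm B (σ + δ) i j| ≤ C := hCb _ hmem
            have h2 : (0:ℝ) ≤ ∑ i, ∑ j, |Rm B (σ + δ) i j| :=
              Finset.sum_nonneg fun i _ => Finset.sum_nonneg fun j _ => abs_nonneg _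
            have : ((σ + δ) - σ) = δ := by ring
            rw [this]
            calc δ * (∑ i, ∑ j, |Rm B (σ + δ) i j|) ≤ δ * C :=
                  mul_le_mul_of_nonneg_left h1 hδpos.le
              _ < 1 := hδC
          exact step σ (σ + δ) hσ (by linarith) hRτ hsmall
  intro σ hσ
  obtain ⟨k, hk⟩ := exists_nat_ge (s1 / δ)
  refine claim k σ hσ ?_
  have : s1 ≤ k * δ := by
    rw [div_le_iff₀ hδpos] at hk
    exact hk
  linarith


lemma res_mono (hdet : ∀ σ : ℝ, 0 ≤ σ → IsUnit (σ • (1 : Matrix ι ι ℝ) - B).det)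
    (hnn : ∀ σ : ℝ, 0 ≤ σ → ∀ i j, 0 ≤ Rm B σ i j) :
    ∀ σ : ℝ, 0 ≤ σ → ∀ i j, Rm B σ i j ≤ Rm B 0 i j := by
  intro σ hσ i j
  have hid : Rm B 0 - Rm B σ = σ • (Rm B 0 * Rm B σ) := by
    have e1 : Rm B 0 * ((σ • (1 : Matrix ι ι ℝ) - B) * Rm B σ) = Rm B 0 := by
      simp only [Rm]
      rw [Matrix.mul_nonsing_inv _ (hdet σ hσ), Matrix.mul_one]
    have e2 : (Rm B 0 * ((0:ℝ) • (1 : Matrix ι ι ℝ) - B)) * Rm B σ = Rm B σ := by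
      simp only [Rm]
      rw [Matrix.nonsing_inv_mul _ (hdet 0 le_rfl), Matrix.one_mul]
    calc Rm B 0 - Rm B σ
        = Rm B 0 * ((σ • (1 : Matrix ι ι ℝ) - B) * Rm B σ)
          - (Rm B 0 * ((0:ℝ) • (1 : Matrix ι ι ℝ) - B)) * Rm B σ := by rw [e1, e2]
      _ = Rm B 0 * (((σ • (1 : Matrix ι ι ℝ) - B) - ((0:ℝ) • (1 : Matrix ι ι ℝ) - B)) * Rm B σ) := by
          rw [Matrix.mul_assoc, ← Matrix.mul_sub, ← Matrix.sub_mul]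
      _ = Rm B 0 * ((σ • (1 : Matrix ι ι ℝ)) * Rm B σ) := by
          congr 2
          simp only [zero_smul]
          abel
      _ = σ • (Rm B 0 * Rm B σ) := by
          rw [Matrix.smul_mul, Matrix.one_mul, Matrix.mul_smul]
  have := congrArg (fun X : Matrix ι ι ℝ => X i j) hid
  simp only [Matrix.sub_apply, Matrix.smul_apply, smul_eq_mul] at this
  have hprod : 0 ≤ (Rm B 0 * Rm B σ) i j := by
    rw [Matrix.mul_apply]
    exact Finset.sum_nonneg fun l _ =>
      mul_nonneg (hnn 0 le_rfl i l) (hnn σ hσ l j)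
  nlinarith [this, mul_nonneg hσ hprod]

lemma res_v (hoff : ∀ i j, i ≠ j → 0 ≤ B i j)
    (hdet : ∀ σ : ℝ, 0 ≤ σ → IsUnit (σ • (1 : Matrix ι ι ℝ) - B).det)
    (hnn : ∀ σ : ℝ, 0 ≤ σ → ∀ i j, 0 ≤ Rm B σ i j) :
    (∀ i, 0 < ∑ j, Rm B 0 i j) ∧ (∀ i, ∑ j, B i j * (∑ l, Rm B 0 j l) = -1) := by
  have hR0 := hnn 0 le_rfl
  have hdiag : ∀ i, 0 < Rm B 0 i i := by
    intro i
    have hmul : ((0:ℝ) • (1 : Matrix ι ι ℝ) - B) * Rm B 0 = 1 := by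
      rw [Rm, Matrix.mul_nonsing_inv _ (hdet 0 le_rfl)]
    have hentry : ∑ l, ((0:ℝ) • (1 : Matrix ι ι ℝ) - B) i l * Rm B 0 l i = 1 := by
      have := congrArg (fun X : Matrix ι ι ℝ => X i i) hmul
      simpa [Matrix.mul_apply, Matrix.one_apply] using this
    have hsplit : ((0:ℝ) • (1 : Matrix ι ι ℝ) - B) i i * Rm B 0 i i
        + ∑ l ∈ Finset.univ.erase i, ((0:ℝ) • (1 : Matrix ι ι ℝ) - B) i l * Rm B 0 l i = 1 := by
      rw [Finset.add_sum_erase _ (fun l => ((0:ℝ) • (1 : Matrix ι ι ℝ) - B) i l * Rm B 0 l i) (Finset.mem_univ i)]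
      exact hentry
    have hrest : ∑ l ∈ Finset.univ.erase i, ((0:ℝ) • (1 : Matrix ι ι ℝ) - B) i l * Rm B 0 l i ≤ 0 := by
      refine Finset.sum_nonpos fun l hl => ?_
      have hli : l ≠ i := Finset.ne_of_mem_erase hl
      refine mul_nonpos_of_nonpos_of_nonneg ?_ (hR0 l i)
      simp only [Matrix.sub_apply, Matrix.smul_apply, Matrix.one_apply, smul_eq_mul]
      have := hoff i l (Ne.symm hli)
      simp only [Ne.symm hli, if_false, mul_ite, mul_one, mul_zero]
      linarith
    have hii : 1 ≤ ((0:ℝ) • (1 : Matrix ι ι ℝ) - B) i i * Rm B 0 i i := by linarith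
    by_contra hcon
    push_neg at hcon
    have : Rm B 0 i i = 0 := le_antisymm hcon (hR0 i i)
    rw [this, mul_zero] at hii
    linarith
  constructor
  · intro i
    calc (0:ℝ) < Rm B 0 i i := hdiag i
      _ ≤ ∑ j, Rm B 0 i j :=
        Finset.single_le_sum (f := fun j => Rm B 0 i j) (fun j _ => hR0 i j) (Finset.mem_univ i)
  · intro i
    have hBR : B * Rm B 0 = -1 := by
      have h1 : ((0:ℝ) • (1 : Matrix ι ι ℝ) - B) * Rm B 0 = 1 := by
        rw [Rm, Matrix.mul_nonsing_inv _ (hdet 0 le_rfl)]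
      have h2 : ((0:ℝ) • (1 : Matrix ι ι ℝ) - B) = -B := by
        simp
      rw [h2] at h1
      have : -(B * Rm B 0) = 1 := by rw [← Matrix.neg_mul]; exact h1
      linear_combination (norm := noncomm_ring) -this
    calc ∑ j, B i j * (∑ l, Rm B 0 j l)
        = ∑ l, ∑ j, B i j * Rm B 0 j l := by
          rw [Finset.sum_comm]
          exact Finset.sum_congr rfl fun j _ => by rw [Finset.mul_sum]
      _ = ∑ l, (B * Rm B 0) i l := by
          exact Finset.sum_congr rfl fun l _ => by rw [Matrix.mul_apply]
      _ = ∑ l, (-1 : Matrix ι ι ℝ) i l := by rw [hBR]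
      _ = -1 := by
          simp only [Matrix.neg_apply, Matrix.one_apply]
          rw [Finset.sum_eq_single i]
          · simp
          · intro b _ hb; simp [Ne.symm hb]
          · simp


lemma res_complex (hoff : ∀ i j, i ≠ j → 0 ≤ B i j)
    (hdet : ∀ σ : ℝ, 0 ≤ σ → IsUnit (σ • (1 : Matrix ι ι ℝ) - B).det) :
    ∀ z : ℂ, 0 ≤ z.re →
      IsUnit ((z • (1 : Matrix ι ι ℂ) - B.map Complex.ofReal).det) ∧
      ∀ i j, ‖(z • (1 : Matrix ι ι ℂ) - B.map Complex.ofReal)⁻¹ i j‖ ≤ Rm B z.re i j := by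
  classical
  have hnn := res_nonneg B hoff hdet
  obtain ⟨hv, hBv⟩ := res_v B hoff hdet hnn
  set v : ι → ℝ := fun j => ∑ l, Rm B 0 j l with hv_def
  set c : ℝ := 1 + ∑ i, |B i i| with hc_def
  have hc1 : 1 ≤ c := by
    have : (0:ℝ) ≤ ∑ i, |B i i| := Finset.sum_nonneg fun i _ => abs_nonneg _
    simp only [hc_def]; linarith
  have hcB : ∀ i : ι, 0 ≤ B i i + c := by
    intro i
    have h1 : |B i i| ≤ ∑ i, |B i i| :=
      Finset.single_le_sum (f := fun i => |B i i|) (fun i _ => abs_nonneg _) (Finset.mem_univ i)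
    have := neg_abs_le (B i i)
    simp only [hc_def]
    linarith
  set P : Matrix ι ι ℝ := B + c • 1 with hP_def
  have hP : ∀ i j, 0 ≤ P i j := by
    intro i j
    by_cases h : i = j
    · subst h
      simp only [hP_def, Matrix.add_apply, Matrix.smul_apply, Matrix.one_apply_eq, smul_eq_mul,
        mul_one]
      linarith [hcB i]
    · simp only [hP_def, Matrix.add_apply, Matrix.smul_apply, Matrix.one_apply_ne h, smul_eq_mul,
        mul_zero, add_zero]
      exact hoff i j h
  have hrowPv : ∀ i, ∑ j, P i j * v j = c * v i - 1 := by
    intro i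
    have : ∀ j, P i j * v j = B i j * v j + c * ((1 : Matrix ι ι ℝ) i j * v j) := by
      intro j
      simp only [hP_def, Matrix.add_apply, Matrix.smul_apply, smul_eq_mul]
      ring
    rw [Finset.sum_congr rfl fun j _ => this j, Finset.sum_add_distrib, hBv i, ← Finset.mul_sum]
    have h1 : ∑ j, (1 : Matrix ι ι ℝ) i j * v j = v i := by
      rw [Finset.sum_eq_single i]
      · simp
      · intro b _ hb; simp [Matrix.one_apply_ne (Ne.symm hb)]
      · simp
    rw [h1]
    ring
  set ε : ℝ := (1 + ∑ i, v i)⁻¹ with hε_def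
  have hvsum : 0 ≤ ∑ i, v i := Finset.sum_nonneg fun i _ => (hv i).le
  have hεpos : 0 < ε := by rw [hε_def]; positivity
  have hε1 : ε ≤ 1 := by
    rw [hε_def, inv_le_one_iff₀]; right; linarith
  have hεv : ∀ i, ε * v i ≤ 1 := by
    intro i
    have h1 : v i ≤ 1 + ∑ i, v i := by
      have := Finset.single_le_sum (f := fun i => v i) (fun i _ => (hv i).le) (Finset.mem_univ i)
      linarith
    calc ε * v i ≤ ε * (1 + ∑ i, v i) := mul_le_mul_of_nonneg_left h1 hεpos.le
      _ = 1 := by rw [hε_def]; field_simp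
  intro z hz
  set σ : ℝ := z.re with hσ_def
  set w : ℂ := z + (c : ℂ) with hw_def
  have hwre : w.re = σ + c := by simp [hw_def, hσ_def]
  have hσc : 0 < σ + c := by linarith
  have hw0 : w ≠ 0 := by
    intro h
    rw [h] at hwre
    simp at hwre
    linarith
  have hwabs : σ + c ≤ ‖w‖ := by
    rw [← hwre]
    exact Complex.re_le_norm w
  set Pc : Matrix ι ι ℂ := P.map Complex.ofReal with hPc_def
  set M : Matrix ι ι ℂ := w⁻¹ • Pc with hM_def
  set N : Matrix ι ι ℝ := (σ + c)⁻¹ • P with hN_def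
  have hd : ∀ i j, ‖M i j‖ ≤ N i j := by
    intro i j
    simp only [hM_def, hN_def, hPc_def, Matrix.smul_apply, Matrix.map_apply, smul_eq_mul,
      norm_mul, norm_inv]
    have h1 : ‖(P i j : ℂ)‖ = P i j := by
      rw [Complex.norm_real, Real.norm_of_nonneg (hP i j)]
    rw [h1]
    refine mul_le_mul_of_nonneg_right ?_ (hP i j)
    exact inv_anti₀ hσc hwabs
  have hdN : ∀ i j, ‖N i j‖ ≤ N i j := by
    intro i j
    refine le_of_eq (Real.norm_of_nonneg ?_)
    simp only [hN_def, Matrix.smul_apply, smul_eq_mul]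
    exact mul_nonneg (inv_nonneg.mpr hσc.le) (hP i j)
  set a : ℝ := (c - ε) / (σ + c) with ha_def
  have ha0 : 0 ≤ a := by
    rw [ha_def]
    have : 0 ≤ c - ε := by linarith
    positivity
  have ha : a < 1 := by
    rw [ha_def, div_lt_one hσc]
    linarith
  have hrowN : ∀ i, ∑ j, N i j * v j ≤ a * v i := by
    intro i
    have h1 : ∑ j, N i j * v j = (σ + c)⁻¹ * (c * v i - 1) := by
      simp only [hN_def, Matrix.smul_apply, smul_eq_mul]
      rw [← hrowPv i, Finset.mul_sum]
      exact Finset.sum_congr rfl fun j _ => by ring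
    rw [h1, ha_def, div_eq_inv_mul, mul_assoc]
    refine mul_le_mul_of_nonneg_left ?_ (inv_nonneg.mpr hσc.le)
    nlinarith [hεv i, hv i]
  obtain ⟨h1C, _⟩ := neumann M N v a hd hv hrowN ha0 ha
  obtain ⟨h1R, _⟩ := neumann N N v a hdN hv hrowN ha0 ha
  have hdom := neumann_dom M N v a hd hv hrowN ha0 ha
  set S : Matrix ι ι ℂ := Matrix.of (fun i j => ∑' k : ℕ, (M ^ k) i j) with hS_def
  set SN : Matrix ι ι ℝ := Matrix.of (fun i j => ∑' k : ℕ, (N ^ k) i j) with hSN_def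
  -- complex factorization
  have hPc_split : Pc = B.map Complex.ofReal + (c : ℂ) • 1 := by
    ext i j
    simp only [hPc_def, hP_def, Matrix.map_apply, Matrix.add_apply, Matrix.smul_apply,
      Matrix.one_apply, smul_eq_mul]
    push_cast [apply_ite Complex.ofReal]
    split_ifs <;> simp
  have hfactC : z • (1 : Matrix ι ι ℂ) - B.map Complex.ofReal = w • ((1 : Matrix ι ι ℂ) - M) := by
    rw [smul_sub, hM_def, smul_smul, mul_inv_cancel₀ hw0, one_smul, hPc_split, hw_def, add_smul]
    abel
  have hfactR : σ • (1 : Matrix ι ι ℝ) - B = (σ + c) • ((1 : Matrix ι ι ℝ) - N) := by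
    rw [smul_sub, hN_def, smul_smul, mul_inv_cancel₀ (ne_of_gt hσc), one_smul, hP_def, add_smul]
    abel
  have hrinvC : (z • (1 : Matrix ι ι ℂ) - B.map Complex.ofReal) * (w⁻¹ • S) = 1 := by
    rw [hfactC, Matrix.smul_mul, Matrix.mul_smul, smul_smul, mul_inv_cancel₀ hw0, one_smul, h1C]
  have hrinvR : (σ • (1 : Matrix ι ι ℝ) - B) * ((σ + c)⁻¹ • SN) = 1 := by
    rw [hfactR, Matrix.smul_mul, Matrix.mul_smul, smul_smul,
      mul_inv_cancel₀ (ne_of_gt hσc), one_smul, h1R]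
  refine ⟨Matrix.isUnit_det_of_right_inverse hrinvC, ?_⟩
  intro i j
  rw [Matrix.inv_eq_right_inv hrinvC]
  have hR : Rm B σ = (σ + c)⁻¹ • SN := by
    rw [Rm]
    exact Matrix.inv_eq_right_inv hrinvR
  rw [hR]
  simp only [Matrix.smul_apply, smul_eq_mul, norm_mul, norm_inv, hS_def, hSN_def, Matrix.of_apply]
  have h2 : ‖∑' k : ℕ, (M ^ k) i j‖ ≤ ∑' k : ℕ, (N ^ k) i j := hdom i j
  have h3 : 0 ≤ ∑' k : ℕ, (N ^ k) i j := by
    have := (norm_nonneg (∑' k : ℕ, (M ^ k) i j)).trans h2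
    exact this
  have h4 : ‖w‖⁻¹ ≤ (σ + c)⁻¹ := inv_anti₀ hσc hwabs
  exact mul_le_mul h4 h2 (norm_nonneg _) (inv_nonneg.mpr hσc.le)

end Resolvent


/-- Schur-complement corner lemma: for an (n+2)×(n+2) matrix whose leading principal
(n+1)×(n+1) block is invertible and whose scalar Schur complement `s` is nonzero,
the matrix is invertible, its determinant factors, and the bottom-right entry of the
inverse is `s⁻¹`. -/
lemma corner_inv {𝕜 : Type*} [Field 𝕜] {n : ℕ} (M : Matrix (Fin (n+2)) (Fin (n+2)) 𝕜)
    (hB : IsUnit (M.submatrix Fin.castSucc Fin.castSucc).det)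
    (s : 𝕜)
    (hs : s = M (Fin.last (n+1)) (Fin.last (n+1)) -
      ∑ i, ∑ j, M (Fin.last (n+1)) (Fin.castSucc i) *
        (M.submatrix Fin.castSucc Fin.castSucc)⁻¹ i j * M (Fin.castSucc j) (Fin.last (n+1)))
    (hs0 : s ≠ 0) :
    IsUnit M.det ∧ M⁻¹ (Fin.last (n+1)) (Fin.last (n+1)) = s⁻¹ ∧
      M.det = (M.submatrix Fin.castSucc Fin.castSucc).det * s := by
  classical
  set e : Fin (n+1) ⊕ Fin 1 ≃ Fin (n+2) := finSumFinEquiv with he_def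
  have he1 : ∀ i : Fin (n+1), e (Sum.inl i) = i.castSucc := fun i => rfl
  have he2 : e (Sum.inr 0) = Fin.last (n+1) := by
    simp [he_def, finSumFinEquiv, Fin.ext_iff]
  set B : Matrix (Fin (n+1)) (Fin (n+1)) 𝕜 := M.submatrix Fin.castSucc Fin.castSucc with hB_def
  set bm : Matrix (Fin (n+1)) (Fin 1) 𝕜 :=
    Matrix.of (fun i _ => M (Fin.castSucc i) (Fin.last (n+1))) with hbm_def
  set cm : Matrix (Fin 1) (Fin (n+1)) 𝕜 :=
    Matrix.of (fun _ j => M (Fin.last (n+1)) (Fin.castSucc j)) with hcm_def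
  set dm : Matrix (Fin 1) (Fin 1) 𝕜 :=
    Matrix.of (fun _ _ => M (Fin.last (n+1)) (Fin.last (n+1))) with hdm_def
  have hblk : M.submatrix e e = fromBlocks B bm cm dm := by
    ext x y
    rcases x with i | i <;> rcases y with j | j
    · simp [Matrix.submatrix_apply, he1, hB_def]
    · have : j = 0 := Subsingleton.elim _ _
      subst this
      simp [Matrix.submatrix_apply, he1, he2, hbm_def]
    · have : i = 0 := Subsingleton.elim _ _
      subst this
      simp [Matrix.submatrix_apply, he1, he2, hcm_def]
    · have hi : i = 0 := Subsingleton.elim _ _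
      have hj : j = 0 := Subsingleton.elim _ _
      subst hi; subst hj
      simp [Matrix.submatrix_apply, he2, hdm_def]
  haveI hBinv : Invertible B := Matrix.invertibleOfIsUnitDet B hB
  -- Schur complement is s • 1
  have hSchur : dm - cm * ⅟B * bm = s • (1 : Matrix (Fin 1) (Fin 1) 𝕜) := by
    ext x y
    have hx : x = 0 := Subsingleton.elim _ _
    have hy : y = 0 := Subsingleton.elim _ _
    subst hx; subst hy
    rw [Matrix.invOf_eq_nonsing_inv]
    simp only [Matrix.sub_apply, Matrix.smul_apply, Matrix.one_apply_eq, smul_eq_mul, mul_one,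
      hdm_def, Matrix.of_apply]
    rw [hs]
    congr 1
    calc (cm * B⁻¹ * bm) 0 0
        = ∑ j, ∑ i, cm 0 i * B⁻¹ i j * bm j 0 := by
          rw [Matrix.mul_apply]
          refine Finset.sum_congr rfl fun j _ => ?_
          rw [Matrix.mul_apply, Finset.sum_mul]
      _ = ∑ i, ∑ j, cm 0 i * B⁻¹ i j * bm j 0 := Finset.sum_comm
      _ = ∑ i, ∑ j, M (Fin.last (n+1)) (Fin.castSucc i) * B⁻¹ i j
            * M (Fin.castSucc j) (Fin.last (n+1)) := by
          refine Finset.sum_congr rfl fun i _ => Finset.sum_congr rfl fun j _ => ?_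
          simp [hcm_def, hbm_def]
  haveI hSinv : Invertible (dm - cm * ⅟B * bm) := by
    refine Matrix.invertibleOfIsUnitDet _ ?_
    rw [hSchur]
    rw [Matrix.det_fin_one]
    simpa using hs0
  have hdet_blk : (fromBlocks B bm cm dm).det = B.det * s := by
    rw [Matrix.det_fromBlocks₁₁, hSchur, Matrix.det_fin_one]
    simp
  have hdetM : M.det = B.det * s := by
    rw [← Matrix.det_submatrix_equiv_self e M, hblk, hdet_blk]
  have hMunit : IsUnit M.det := by
    rw [hdetM]
    exact (hB.mul (isUnit_iff_ne_zero.mpr hs0))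
  refine ⟨hMunit, ?_, hdetM⟩
  haveI hblkInv : Invertible (fromBlocks B bm cm dm) := by
    refine Matrix.invertibleOfIsUnitDet _ ?_
    rw [hdet_blk]
    exact (hB.mul (isUnit_iff_ne_zero.mpr hs0))
  -- inverse of the reindexed matrix
  have hsub_inv : (fromBlocks B bm cm dm)⁻¹ = M⁻¹.submatrix e e := by
    refine Matrix.inv_eq_right_inv ?_
    rw [← hblk, Matrix.submatrix_mul_equiv M M⁻¹ _ e _,
      Matrix.mul_nonsing_inv _ hMunit, Matrix.submatrix_one_equiv]
  have hfour := Matrix.invOf_fromBlocks₁₁_eq B bm cm dm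
  have hinv_inv : (fromBlocks B bm cm dm)⁻¹ = ⅟(fromBlocks B bm cm dm) :=
    (Matrix.invOf_eq_nonsing_inv _).symm
  have hcorner : M⁻¹ (Fin.last (n+1)) (Fin.last (n+1))
      = (⅟(dm - cm * ⅟B * bm)) 0 0 := by
    have h1 : M⁻¹ (Fin.last (n+1)) (Fin.last (n+1))
        = (M⁻¹.submatrix e e) (Sum.inr 0) (Sum.inr 0) := by
      rw [Matrix.submatrix_apply, he2]
    rw [h1, ← hsub_inv, hinv_inv, hfour]
    simp [Matrix.fromBlocks_apply₂₂]
  rw [hcorner]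
  have hSchur_inv : ⅟(dm - cm * ⅟B * bm) = s⁻¹ • (1 : Matrix (Fin 1) (Fin 1) 𝕜) := by
    have : (dm - cm * ⅟B * bm) * (s⁻¹ • (1 : Matrix (Fin 1) (Fin 1) 𝕜)) = 1 := by
      rw [hSchur, Matrix.smul_mul, Matrix.mul_smul, Matrix.one_mul, smul_smul,
        mul_inv_cancel₀ hs0, one_smul]
    rw [Matrix.invOf_eq_nonsing_inv, Matrix.inv_eq_right_inv this]
  rw [hSchur_inv]
  simp



lemma map_smul_one_sub {ι : Type*} [Fintype ι] [DecidableEq ι] (M : Matrix ι ι ℝ) (σ : ℝ) :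
    (σ • (1 : Matrix ι ι ℝ) - M).map Complex.ofReal
      = (σ : ℂ) • (1 : Matrix ι ι ℂ) - M.map Complex.ofReal := by
  ext i j
  simp only [Matrix.map_apply, Matrix.sub_apply, Matrix.smul_apply, Matrix.one_apply,
    smul_eq_mul, Complex.ofReal_sub, Complex.ofReal_mul]
  split_ifs <;> simp

lemma hur_unit {ι : Type*} [Fintype ι] [DecidableEq ι] (M : Matrix ι ι ℝ)
    (h : ∀ z ∈ spectrum ℂ (M.map Complex.ofReal), z.re < 0) :
    ∀ z : ℂ, 0 ≤ z.re → IsUnit (z • (1 : Matrix ι ι ℂ) - M.map Complex.ofReal) := by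
  intro z hz
  by_contra hcon
  have hmem : z ∈ spectrum ℂ (M.map Complex.ofReal) := by
    rw [spectrum.mem_iff]
    intro h'
    exact hcon (by rwa [Algebra.algebraMap_eq_smul_one] at h')
  linarith [h z hmem]

lemma hur_unit_real {ι : Type*} [Fintype ι] [DecidableEq ι] (M : Matrix ι ι ℝ)
    (h : ∀ z ∈ spectrum ℂ (M.map Complex.ofReal), z.re < 0) :
    ∀ σ : ℝ, 0 ≤ σ → IsUnit (σ • (1 : Matrix ι ι ℝ) - M).det := by
  intro σ hσ
  have h1 : IsUnit ((σ : ℂ) • (1 : Matrix ι ι ℂ) - M.map Complex.ofReal) :=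
    hur_unit M h (σ : ℂ) (by simpa using hσ)
  rw [Matrix.isUnit_iff_isUnit_det, ← map_smul_one_sub] at h1
  have h2 : ((σ • (1 : Matrix ι ι ℝ) - M).map Complex.ofReal).det
      = ((σ • (1 : Matrix ι ι ℝ) - M).det : ℂ) := by
    rw [← Complex.coe_algebraMap]
    exact (RingHom.map_det (algebraMap ℝ ℂ) _).symm
  rw [h2] at h1
  refine isUnit_iff_ne_zero.mpr fun hh => ?_
  rw [hh] at h1
  simpa using h1.ne_zero



end Stmt15Aux

open Stmt15Aux

/-- Theorem 4 of the paper (structural stability, output unstable case): for a Metzler,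
invertible, output unstable matrix A with g₀ < 0, the closed-loop Jacobian of the p-type
AIC is Hurwitz stable for all controller parameters η, k_p > 0. -/
theorem stmt15 (n : ℕ) (A : Matrix (Fin (n+2)) (Fin (n+2)) ℝ)
    (hMetz : Metzler A) (hInv : IsUnit A.det)
    (h11 : HurwitzStable (A.submatrix Fin.castSucc Fin.castSucc))
    (hnn : 0 < A (Fin.last (n+1)) (Fin.last (n+1)))
    (b₀ : Fin (n+2) → ℝ) (hb₀ : ∀ i, 0 ≤ b₀ i)
    (μ θ r g₀ gn u : ℝ) (hμ : 0 < μ) (hθ : 0 < θ) (hr : r = μ / θ)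
    (hg₀ : g₀ = -((A⁻¹ *ᵥ b₀) (Fin.last (n+1))))
    (hgn : gn = -(A⁻¹ (Fin.last (n+1)) (Fin.last (n+1))))
    (hg₀neg : g₀ < 0) (hu : u = (g₀ - r) / (gn * r)) :
    ∀ η kp : ℝ, 0 < η → 0 < kp →
      HurwitzStable (Matrix.fromBlocks
        (A - u • Matrix.vecMulVec
          (Pi.single (Fin.last (n+1)) 1) (Pi.single (Fin.last (n+1)) 1))
        (Matrix.of fun (i : Fin (n+2)) (j : Fin 2) =>
          if j = 1 then -(kp * r) * (Pi.single (Fin.last (n+1)) 1 : Fin (n+2) → ℝ) i else 0)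
        (Matrix.of fun (i : Fin 2) (j : Fin (n+2)) =>
          if i = 1 then (Pi.single (Fin.last (n+1)) 1 : Fin (n+2) → ℝ) j else 0)
        !![-(η * u), -(μ * kp / u); -(η * u), -(μ * kp / u)]) := by
  classical
  intro η kp hη hkp
  unfold HurwitzStable
  intro z hz
  by_contra hcon
  push_neg at hcon
  rw [spectrum.mem_iff] at hz
  apply hz; clear hz
  rw [Algebra.algebraMap_eq_smul_one, Matrix.isUnit_iff_isUnit_det]
  -- notation
  set ℓ : Fin (n+2) := Fin.last (n+1) with hℓ_def
  set B : Matrix (Fin (n+1)) (Fin (n+1)) ℝ := A.submatrix Fin.castSucc Fin.castSucc with hB_def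
  have hBoff : ∀ i j, i ≠ j → 0 ≤ B i j := by
    intro i j hij
    exact hMetz _ _ (fun h => hij (Fin.castSucc_inj.mp h))
  have hBdet : ∀ σ : ℝ, 0 ≤ σ → IsUnit (σ • (1 : Matrix (Fin (n+1)) (Fin (n+1)) ℝ) - B).det :=
    hur_unit_real B h11
  have hnnR := res_nonneg B hBoff hBdet
  have hmono := res_mono B hBdet hnnR
  have hcx := res_complex B hBoff hBdet
  have hbv : ∀ i : Fin (n+1), 0 ≤ A i.castSucc ℓ :=
    fun i => hMetz _ _ (Fin.ne_of_lt (Fin.castSucc_lt_last i))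
  have hcv : ∀ j : Fin (n+1), 0 ≤ A ℓ j.castSucc :=
    fun j => hMetz _ _ (Fin.ne_of_gt (Fin.castSucc_lt_last j))
  set m0 : ℝ := ∑ i, ∑ j, A ℓ i.castSucc * Rm B 0 i j * A j.castSucc ℓ with hm0_def
  have hm0 : 0 ≤ m0 :=
    Finset.sum_nonneg fun i _ => Finset.sum_nonneg fun j _ =>
      mul_nonneg (mul_nonneg (hcv i) (hnnR 0 le_rfl i j)) (hbv j)
  set σ₀ : ℝ := A ℓ ℓ + m0 with hσ₀_def
  have hσ₀pos : 0 < σ₀ := by rw [hσ₀_def]; linarith [hnn]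
  -- Step A : A⁻¹ ℓ ℓ = σ₀⁻¹
  have hnegBdet : IsUnit (-B).det := by
    have h0 := hBdet 0 le_rfl
    have he : (0:ℝ) • (1 : Matrix (Fin (n+1)) (Fin (n+1)) ℝ) - B = -B := by simp
    rwa [he] at h0
  have hBdetunit : IsUnit B.det := by
    rw [Matrix.det_neg] at hnegBdet
    rcases isUnit_iff_ne_zero.mp hnegBdet with h
    refine isUnit_iff_ne_zero.mpr fun hh => h ?_
    rw [hh, mul_zero]
  have hR0eq : B⁻¹ = -Rm B 0 := by
    refine Matrix.inv_eq_right_inv ?_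
    have he : (0:ℝ) • (1 : Matrix (Fin (n+1)) (Fin (n+1)) ℝ) - B = -B := by simp
    rw [Rm, he, Matrix.mul_neg, ← Matrix.neg_mul, Matrix.mul_nonsing_inv _ hnegBdet]
  have hsA : σ₀ = A ℓ ℓ - ∑ i, ∑ j, A ℓ (Fin.castSucc i) *
      (A.submatrix Fin.castSucc Fin.castSucc)⁻¹ i j * A (Fin.castSucc j) ℓ := by
    rw [← hB_def, hR0eq]
    have hneg : ∑ i, ∑ j, A ℓ (Fin.castSucc i) * (-Rm B 0) i j * A (Fin.castSucc j) ℓ = -m0 := by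
      rw [hm0_def, ← Finset.sum_neg_distrib]
      refine Finset.sum_congr rfl fun i _ => ?_
      rw [← Finset.sum_neg_distrib]
      refine Finset.sum_congr rfl fun j _ => ?_
      simp only [Matrix.neg_apply]
      ring
    rw [hneg, sub_neg_eq_add, hσ₀_def]
  obtain ⟨-, hAcorner, -⟩ :=
    corner_inv A (hB_def ▸ hBdetunit) σ₀ hsA (ne_of_gt hσ₀pos)
  -- Step B : scalar facts
  have hrpos : 0 < r := by rw [hr]; positivity
  have hgn' : gn = -σ₀⁻¹ := by rw [hgn, hAcorner]
  have hrne : r ≠ 0 := ne_of_gt hrpos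
  have hσ₀ne : σ₀ ≠ 0 := ne_of_gt hσ₀pos
  have hur : u * r = σ₀ * (r - g₀) := by
    rw [hu, hgn']
    field_simp
    ring
  have hu0 : 0 < u := by nlinarith [mul_pos hσ₀pos (show 0 < r - g₀ by linarith)]
  have huσ : σ₀ < u := by nlinarith [mul_pos hσ₀pos (neg_pos.mpr hg₀neg)]
  -- Step C : complex Schur scalar
  obtain ⟨hZdet, hZdom⟩ := hcx z hcon
  set RB : Matrix (Fin (n+1)) (Fin (n+1)) ℂ :=
    (z • (1 : Matrix (Fin (n+1)) (Fin (n+1)) ℂ) - B.map Complex.ofReal)⁻¹ with hRB_def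
  set mz : ℂ := ∑ i, ∑ j, (A ℓ i.castSucc : ℂ) * RB i j * (A j.castSucc ℓ : ℂ) with hmz_def
  have hmz_norm : ‖mz‖ ≤ m0 := by
    rw [hmz_def]
    calc ‖∑ i, ∑ j, (A ℓ i.castSucc : ℂ) * RB i j * (A j.castSucc ℓ : ℂ)‖
        ≤ ∑ i, ‖∑ j, (A ℓ i.castSucc : ℂ) * RB i j * (A j.castSucc ℓ : ℂ)‖ := norm_sum_le _ _
      _ ≤ ∑ i, ∑ j, ‖(A ℓ i.castSucc : ℂ) * RB i j * (A j.castSucc ℓ : ℂ)‖ :=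
          Finset.sum_le_sum fun i _ => norm_sum_le _ _
      _ = ∑ i, ∑ j, A ℓ i.castSucc * ‖RB i j‖ * A j.castSucc ℓ := by
          refine Finset.sum_congr rfl fun i _ => Finset.sum_congr rfl fun j _ => ?_
          rw [norm_mul, norm_mul, Complex.norm_real, Complex.norm_real,
            Real.norm_of_nonneg (hcv i), Real.norm_of_nonneg (hbv j)]
      _ ≤ ∑ i, ∑ j, A ℓ i.castSucc * Rm B z.re i j * A j.castSucc ℓ := by
          refine Finset.sum_le_sum fun i _ => Finset.sum_le_sum fun j _ => ?_
          refine mul_le_mul_of_nonneg_right ?_ (hbv j)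
          exact mul_le_mul_of_nonneg_left (hZdom i j) (hcv i)
      _ ≤ ∑ i, ∑ j, A ℓ i.castSucc * Rm B 0 i j * A j.castSucc ℓ := by
          refine Finset.sum_le_sum fun i _ => Finset.sum_le_sum fun j _ => ?_
          refine mul_le_mul_of_nonneg_right ?_ (hbv j)
          exact mul_le_mul_of_nonneg_left (hmono z.re hcon i j) (hcv i)
      _ = m0 := hm0_def.symm
  set hS : ℂ := z - ((A ℓ ℓ - u : ℝ) : ℂ) - mz with hS_def
  have hSre : u - σ₀ ≤ hS.re := by
    have h1 : hS.re = z.re - (A ℓ ℓ - u) - mz.re := by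
      rw [hS_def]
      simp [Complex.sub_re, Complex.ofReal_re]
    have h2 : mz.re ≤ m0 := by
      refine le_trans (Complex.re_le_norm mz) (le_trans (le_of_eq ?_) hmz_norm)
      rfl
    rw [h1]
    linarith [h2, hcon, hσ₀_def.le, hσ₀_def.ge]
  have hSre0 : 0 < hS.re := by linarith [mul_pos hσ₀pos (neg_pos.mpr hg₀neg)]
  have hS0 : hS ≠ 0 := fun h => by rw [h] at hSre0; simp at hSre0
  -- Step D : Schur data for z•1 - Ā
  set Ab : Matrix (Fin (n+2)) (Fin (n+2)) ℝ :=
    A - u • Matrix.vecMulVec (Pi.single ℓ 1) (Pi.single ℓ 1) with hAb_def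
  set M1 : Matrix (Fin (n+2)) (Fin (n+2)) ℂ :=
    z • (1 : Matrix (Fin (n+2)) (Fin (n+2)) ℂ) - Ab.map Complex.ofReal with hM1_def
  have hM1sub : M1.submatrix Fin.castSucc Fin.castSucc
      = z • (1 : Matrix (Fin (n+1)) (Fin (n+1)) ℂ) - B.map Complex.ofReal := by
    ext i j
    have hil : Fin.castSucc i ≠ ℓ := Fin.ne_of_lt (Fin.castSucc_lt_last i)
    simp only [hM1_def, hAb_def, hB_def, Matrix.submatrix_apply, Matrix.sub_apply,
      Matrix.smul_apply, Matrix.one_apply, Matrix.map_apply, Matrix.vecMulVec_apply,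
      Pi.single_apply, smul_eq_mul, Fin.castSucc_inj, hil, if_false, mul_zero, zero_mul,
      sub_zero, Complex.ofReal_sub, Complex.ofReal_mul]
  have hM1row : ∀ i : Fin (n+1), M1 ℓ i.castSucc = -(A ℓ i.castSucc : ℂ) := by
    intro i
    have hil : Fin.castSucc i ≠ ℓ := Fin.ne_of_lt (Fin.castSucc_lt_last i)
    simp only [hM1_def, hAb_def, Matrix.sub_apply, Matrix.smul_apply, Matrix.one_apply,
      Matrix.map_apply, Matrix.vecMulVec_apply, Pi.single_apply, smul_eq_mul]
    rw [if_neg (Ne.symm hil), if_neg hil]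
    push_cast
    ring
  have hM1col : ∀ j : Fin (n+1), M1 j.castSucc ℓ = -(A j.castSucc ℓ : ℂ) := by
    intro j
    have hjl : Fin.castSucc j ≠ ℓ := Fin.ne_of_lt (Fin.castSucc_lt_last j)
    simp only [hM1_def, hAb_def, Matrix.sub_apply, Matrix.smul_apply, Matrix.one_apply,
      Matrix.map_apply, Matrix.vecMulVec_apply, Pi.single_apply, smul_eq_mul]
    rw [if_neg hjl, if_neg hjl]
    push_cast
    ring
  have hM1cor : M1 ℓ ℓ = z - ((A ℓ ℓ - u : ℝ) : ℂ) := by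
    simp only [hM1_def, hAb_def, Matrix.sub_apply, Matrix.smul_apply, Matrix.one_apply_eq,
      Matrix.map_apply, Matrix.vecMulVec_apply, Pi.single_apply, smul_eq_mul, mul_one,
      if_pos rfl]
    push_cast
    ring
  have hsM1 : hS = M1 ℓ ℓ - ∑ i, ∑ j, M1 ℓ (Fin.castSucc i) *
      (M1.submatrix Fin.castSucc Fin.castSucc)⁻¹ i j * M1 (Fin.castSucc j) ℓ := by
    rw [hM1cor, hM1sub, ← hRB_def]
    have : ∑ i, ∑ j, M1 ℓ (Fin.castSucc i) * RB i j * M1 (Fin.castSucc j) ℓ = mz := by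
      rw [hmz_def]
      refine Finset.sum_congr rfl fun i _ => Finset.sum_congr rfl fun j _ => ?_
      rw [hM1row i, hM1col j]
      ring
    rw [this, hS_def]
  obtain ⟨hM1unit, hM1corner, -⟩ :=
    corner_inv M1 (by rw [hM1sub]; exact hZdet) hS hsM1 hS0
  -- Step E : closed-loop determinant
  haveI : Invertible M1 := M1.invertibleOfIsUnitDet hM1unit
  set Bb : Matrix (Fin (n+2)) (Fin 2) ℝ := Matrix.of fun (i : Fin (n+2)) (j : Fin 2) =>
    if j = 1 then -(kp * r) * (Pi.single ℓ 1 : Fin (n+2) → ℝ) i else 0 with hBb_def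
  set Cb : Matrix (Fin 2) (Fin (n+2)) ℝ := Matrix.of fun (i : Fin 2) (j : Fin (n+2)) =>
    if i = 1 then (Pi.single ℓ 1 : Fin (n+2) → ℝ) j else 0 with hCb_def
  set Db : Matrix (Fin 2) (Fin 2) ℝ :=
    !![-(η * u), -(μ * kp / u); -(η * u), -(μ * kp / u)] with hDb_def
  have e1 : z • (1 : Matrix (Fin (n+2) ⊕ Fin 2) (Fin (n+2) ⊕ Fin 2) ℂ)
      = fromBlocks (z • 1) 0 0 (z • 1) := by
    rw [← Matrix.fromBlocks_one, Matrix.fromBlocks_smul]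
    simp only [smul_zero]
  have hsplit : z • (1 : Matrix (Fin (n+2) ⊕ Fin 2) (Fin (n+2) ⊕ Fin 2) ℂ)
        - (fromBlocks Ab Bb Cb Db).map Complex.ofReal
      = fromBlocks M1 (-(Bb.map Complex.ofReal)) (-(Cb.map Complex.ofReal))
          (z • (1 : Matrix (Fin 2) (Fin 2) ℂ) - Db.map Complex.ofReal) := by
    rw [Matrix.fromBlocks_map, e1, sub_eq_add_neg, Matrix.fromBlocks_neg,
      Matrix.fromBlocks_add, zero_add, zero_add, ← sub_eq_add_neg, ← sub_eq_add_neg, ← hM1_def]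
  rw [hsplit, Matrix.det_fromBlocks₁₁]
  refine hM1unit.mul (isUnit_iff_ne_zero.mpr ?_)
  -- compute the 2×2 matrix
  set α : ℂ := ((η * u : ℝ) : ℂ) with hα_def
  set β : ℂ := ((μ * kp / u : ℝ) : ℂ) with hβ_def
  set γ : ℂ := ((kp * r : ℝ) : ℂ) with hγ_def
  have hprod : ∀ (i : Fin 2) (j : Fin 2),
      ((Cb.map Complex.ofReal) * M1⁻¹ * (Bb.map Complex.ofReal)) i j
      = if i = 1 ∧ j = 1 then -γ * hS⁻¹ else 0 := by
    intro i j
    have h1 : ∀ q, ((Cb.map Complex.ofReal) * M1⁻¹) i q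
        = if i = 1 then M1⁻¹ ℓ q else 0 := by
      intro q
      rw [Matrix.mul_apply]
      by_cases hi : i = 1
      · simp only [hi, hCb_def, Matrix.map_apply, Matrix.of_apply, if_true, Pi.single_apply,
          apply_ite Complex.ofReal, Complex.ofReal_one, Complex.ofReal_zero, ite_mul, one_mul,
          zero_mul]
        rw [Finset.sum_ite_eq' Finset.univ ℓ (fun p => M1⁻¹ p q)]
        simp
      · simp only [hi, hCb_def, Matrix.map_apply, Matrix.of_apply, if_false,
          Complex.ofReal_zero, zero_mul, Finset.sum_const_zero]
    rw [Matrix.mul_apply]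
    simp only [h1]
    by_cases hi : i = 1
    · by_cases hj : j = 1
      · simp only [hi, hj, if_true, and_self, hBb_def, Matrix.map_apply, Matrix.of_apply,
          Pi.single_apply, apply_ite Complex.ofReal, Complex.ofReal_mul, Complex.ofReal_neg,
          Complex.ofReal_one, Complex.ofReal_zero, mul_ite, mul_one, mul_zero]
        rw [Finset.sum_ite_eq' Finset.univ ℓ (fun q => M1⁻¹ ℓ q * (-((kp:ℂ) * (r:ℂ))))]
        simp only [Finset.mem_univ, if_true, hM1corner]
        rw [hγ_def]
        push_cast
        rw [show M1⁻¹ ℓ ℓ = hS⁻¹ from hM1corner]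
        ring
      · simp only [hi, hj, if_true, and_false, if_false, hBb_def, Matrix.map_apply,
          Matrix.of_apply, Complex.ofReal_zero, mul_zero, Finset.sum_const_zero]
    · simp only [hi, if_false, false_and, zero_mul, Finset.sum_const_zero]
  have hW : (z • (1 : Matrix (Fin 2) (Fin 2) ℂ) - Db.map Complex.ofReal)
        - (-(Cb.map Complex.ofReal)) * ⅟M1 * (-(Bb.map Complex.ofReal))
      = !![z + α, β; α, z + β + γ * hS⁻¹] := by
    rw [Matrix.invOf_eq_nonsing_inv]
    simp only [Matrix.neg_mul, Matrix.mul_neg, neg_neg]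
    ext i j
    rw [Matrix.sub_apply, hprod i j]
    fin_cases i <;> fin_cases j <;>
      simp [hDb_def, Matrix.map_apply, Matrix.sub_apply, Matrix.smul_apply, Matrix.one_apply,
        hα_def, hβ_def, hγ_def] <;>
      push_cast <;> ring
  rw [hW, Matrix.det_fin_two_of]
  -- nonvanishing
  have hαre : α.re = η * u := by rw [hα_def]; simp
  have hαim : α.im = 0 := by rw [hα_def]; simp
  have hzα : z + α ≠ 0 := by
    intro h
    have : (z + α).re = 0 := by rw [h]; simp
    rw [Complex.add_re, hαre] at this
    nlinarith [mul_pos hη hu0, hcon]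
  set F : ℂ := z + γ * hS⁻¹ + β * (z * (z + α)⁻¹) with hF_def
  have hfact : (z + α) * (z + β + γ * hS⁻¹) - β * α = (z + α) * F := by
    rw [hF_def]
    field_simp
    ring
  have hγre : 0 < (γ * hS⁻¹).re := by
    rw [hγ_def, Complex.re_ofReal_mul, Complex.inv_re]
    have h1 : 0 < Complex.normSq hS := Complex.normSq_pos.mpr hS0
    have h2 : 0 < kp * r := mul_pos hkp hrpos
    positivity
  have hβre : 0 ≤ (β * (z * (z + α)⁻¹)).re := by
    rw [hβ_def, Complex.re_ofReal_mul]
    refine mul_nonneg (by positivity) ?_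
    rw [← div_eq_mul_inv, Complex.div_re]
    have h3 : (z + α).re = z.re + η * u := by rw [Complex.add_re, hαre]
    have h4 : (z + α).im = z.im := by rw [Complex.add_im, hαim, add_zero]
    rw [h3, h4]
    have h5 : 0 ≤ Complex.normSq (z + α) := Complex.normSq_nonneg _
    have h6 : 0 ≤ z.re * (z.re + η * u) := mul_nonneg hcon (by nlinarith [mul_pos hη hu0])
    have h7 : 0 ≤ z.im * z.im := mul_self_nonneg _
    positivity
  have hFre : 0 < F.re := by
    rw [hF_def, Complex.add_re, Complex.add_re]
    linarith [hcon, hγre, hβre]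
  have hF0 : F ≠ 0 := fun h => by rw [h] at hFre; simp at hFre
  rw [hfact]
  exact mul_ne_zero hzα hF0
end

section
/- Let n ≥ 2, let J ∈ ℝ^{n×n}, let u* > 0, μ > 0, and r > 0, and set Ā := J − u* eₙeₙᵀ. Assume: (1) there exists a symmetric positive definite matrix P₁ ∈ ℝ^{(n−1)×(n−1)} such that, with P := diag(P₁, 1) ∈ ℝ^{n×n}, the matrix ĀᵀP + PĀ is negative definite; and (2) Ā is invertible and −eₙᵀĀ⁻¹eₙ > 0. Then for all η > 0 and all k_p > 0, the (n+2)×(n+2) matrix [[Ā, 0, −k_p r eₙ], [0, −η u*, −μ k_p/u*], [eₙᵀ, −η u*, −μ k_p/u*]] is Hurwitz stable. -/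
open Matrix

section Helpers

lemma exists_eigvec {m : Type*} [Fintype m] [DecidableEq m] {M : Matrix m m ℂ} {z : ℂ}
    (hz : z ∈ spectrum ℂ M) : ∃ v : m → ℂ, v ≠ 0 ∧ M *ᵥ v = z • v := by
  rw [spectrum.mem_iff] at hz
  have hdet : (z • (1 : Matrix m m ℂ) - M).det = 0 := by
    by_contra hd
    exact hz (by
      have : IsUnit (z • (1 : Matrix m m ℂ) - M).det := isUnit_iff_ne_zero.mpr hd
      simpa [Algebra.algebraMap_eq_smul_one] using (Matrix.isUnit_iff_isUnit_det _).mpr this)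
  obtain ⟨v, hv, hveq⟩ := (Matrix.exists_mulVec_eq_zero_iff.mpr hdet)
  refine ⟨v, hv, ?_⟩
  rw [sub_mulVec, smul_mulVec, one_mulVec, sub_eq_zero] at hveq
  exact hveq.symm

lemma re_quad_eq {m : Type*} [Fintype m] (Q : Matrix m m ℝ) (x : m → ℂ) :
    (star x ⬝ᵥ (Q.map Complex.ofReal) *ᵥ x).re
      = star (fun i => (x i).re) ⬝ᵥ Q *ᵥ (fun i => (x i).re)
        + star (fun i => (x i).im) ⬝ᵥ Q *ᵥ (fun i => (x i).im) := by
  have h : star x ⬝ᵥ ((Q.map Complex.ofReal) *ᵥ x)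
      = ∑ i, ∑ j, ((Q i j : ℂ) * ((starRingEnd ℂ) (x i) * x j)) := by
    simp only [dotProduct, mulVec, map_apply, Pi.star_apply, Finset.mul_sum]
    refine Finset.sum_congr rfl fun i _ => Finset.sum_congr rfl fun j _ => by
      simp [RCLike.star_def]; ring
  rw [h]
  rw [Complex.re_sum]
  simp only [Complex.re_sum, Complex.mul_re, Complex.conj_re,
    Complex.conj_im, dotProduct, mulVec, star_trivial, Pi.star_apply, Finset.mul_sum]
  rw [← Finset.sum_add_distrib]
  refine Finset.sum_congr rfl fun i _ => ?_
  rw [← Finset.sum_add_distrib]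
  refine Finset.sum_congr rfl fun j _ => by
    simp [Complex.ofReal_re, Complex.ofReal_im]; ring

lemma re_quad_pos {m : Type*} [Fintype m] {Q : Matrix m m ℝ} (hQ : Q.PosDef)
    {x : m → ℂ} (hx : x ≠ 0) : 0 < (star x ⬝ᵥ (Q.map Complex.ofReal) *ᵥ x).re := by
  rw [re_quad_eq]
  have hab : (fun i => (x i).re) ≠ 0 ∨ (fun i => (x i).im) ≠ 0 := by
    by_contra h
    push_neg at h
    apply hx
    funext i
    have h1 := congrFun h.1 i
    have h2 := congrFun h.2 i
    simp only [Pi.zero_apply] at h1 h2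
    exact Complex.ext h1 h2
  rcases hab with h | h
  · exact lt_of_lt_of_le (hQ.dotProduct_mulVec_pos h) (le_add_of_nonneg_right (hQ.posSemidef.dotProduct_mulVec_nonneg _))
  · exact lt_of_lt_of_le (hQ.dotProduct_mulVec_pos h) (le_add_of_nonneg_left (hQ.posSemidef.dotProduct_mulVec_nonneg _))

lemma re_quad_nonneg {m : Type*} [Fintype m] {Q : Matrix m m ℝ} (hQ : Q.PosSemidef)
    (x : m → ℂ) : 0 ≤ (star x ⬝ᵥ (Q.map Complex.ofReal) *ᵥ x).re := by
  rw [re_quad_eq]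
  exact add_nonneg (hQ.dotProduct_mulVec_nonneg _) (hQ.dotProduct_mulVec_nonneg _)

lemma mulVec_map_star {m k : Type*} [Fintype k] (A : Matrix m k ℝ) (x : k → ℂ) :
    (A.map Complex.ofReal) *ᵥ (star x) = star ((A.map Complex.ofReal) *ᵥ x) := by
  funext i
  simp only [mulVec, dotProduct, map_apply, Pi.star_apply, RCLike.star_def]
  rw [map_sum]
  exact Finset.sum_congr rfl fun j _ => by
    rw [_root_.map_mul, Complex.conj_ofReal]

end Helpers

set_option maxHeartbeats 2000000 in
/-- Theorem 5 of the paper (nonlinear case): if the shifted Jacobian Ā = J − u* eₙeₙᵀ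
admits a block-diagonal Lyapunov certificate P = diag(P₁, 1) and the static gain
−eₙᵀĀ⁻¹eₙ is positive, then the closed-loop Jacobian of the p-type AIC is Hurwitz stable
for all controller parameters η, k_p > 0.  The state index set is Fin (n+1) ⊕ Fin 1,
whose last element Sum.inr 0 plays the role of the output coordinate. -/
theorem stmt16 (n : ℕ) (J : Matrix (Fin (n+1) ⊕ Fin 1) (Fin (n+1) ⊕ Fin 1) ℝ)
    (u μ r : ℝ) (hu : 0 < u) (hμ : 0 < μ) (hr : 0 < r)
    (Abar : Matrix (Fin (n+1) ⊕ Fin 1) (Fin (n+1) ⊕ Fin 1) ℝ)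
    (hAbar : Abar = J - u • Matrix.vecMulVec
      (Pi.single (Sum.inr 0) 1 : Fin (n+1) ⊕ Fin 1 → ℝ)
      (Pi.single (Sum.inr 0) 1 : Fin (n+1) ⊕ Fin 1 → ℝ))
    (h1 : ∃ P₁ : Matrix (Fin (n+1)) (Fin (n+1)) ℝ, P₁.PosDef ∧
      (-(Abarᵀ * Matrix.fromBlocks P₁ 0 0 (1 : Matrix (Fin 1) (Fin 1) ℝ)
          + Matrix.fromBlocks P₁ 0 0 (1 : Matrix (Fin 1) (Fin 1) ℝ) * Abar)).PosDef)
    (h2a : IsUnit Abar.det)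
    (h2b : 0 < -(Abar⁻¹ (Sum.inr 0) (Sum.inr 0))) :
    ∀ η kp : ℝ, 0 < η → 0 < kp →
      HurwitzStable (Matrix.fromBlocks Abar
        (Matrix.of fun (i : Fin (n+1) ⊕ Fin 1) (j : Fin 2) =>
          if j = 1 then -(kp * r) * (Pi.single (Sum.inr 0) 1 : Fin (n+1) ⊕ Fin 1 → ℝ) i else 0)
        (Matrix.of fun (i : Fin 2) (j : Fin (n+1) ⊕ Fin 1) =>
          if i = 1 then (Pi.single (Sum.inr 0) 1 : Fin (n+1) ⊕ Fin 1 → ℝ) j else 0)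
        !![-(η * u), -(μ * kp / u); -(η * u), -(μ * kp / u)]) := by
  obtain ⟨P₁, hP₁, hQ⟩ := h1
  intro η kp hη hkp z hz
  by_contra hre
  push_neg at hre
  -- names
  set P : Matrix (Fin (n+1) ⊕ Fin 1) (Fin (n+1) ⊕ Fin 1) ℝ :=
    Matrix.fromBlocks P₁ 0 0 (1 : Matrix (Fin 1) (Fin 1) ℝ) with hPdef
  set Q : Matrix (Fin (n+1) ⊕ Fin 1) (Fin (n+1) ⊕ Fin 1) ℝ := -(Abarᵀ * P + P * Abar) with hQdef
  -- P is positive definite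
  have hP : P.PosDef := by
    refine Matrix.PosDef.of_dotProduct_mulVec_pos ?_ ?_
    · show Pᴴ = P
      rw [hPdef, Matrix.fromBlocks_conjTranspose]
      rw [hP₁.1]
      simp
    · intro w hw
      have hw' : w = Sum.elim (w ∘ Sum.inl) (w ∘ Sum.inr) := (Sum.elim_comp_inl_inr w).symm
      rw [hw', hPdef, Matrix.fromBlocks_mulVec]
      simp only [Matrix.zero_mulVec, Matrix.one_mulVec, add_zero, zero_add]
      rw [star_trivial, sumElim_dotProduct_sumElim]
      simp only [Sum.elim_comp_inl, Sum.elim_comp_inr]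
      by_cases h1 : (w ∘ Sum.inl) = 0
      · have h2 : (w ∘ Sum.inr) ≠ 0 := by
          intro h2
          apply hw
          rw [hw', h1, h2]
          simp
        have := dotProduct_self_eq_zero (v := w ∘ Sum.inr)
        have hpos : 0 < (w ∘ Sum.inr) ⬝ᵥ (w ∘ Sum.inr) := by
          rcases lt_or_eq_of_le (dotProduct_self_star_nonneg (w ∘ Sum.inr)) with h | h
          · simpa [star_trivial] using h
          · exact absurd (dotProduct_self_eq_zero.mp (by simpa [star_trivial] using h.symm)) h2
        have hnn : 0 ≤ (w ∘ Sum.inl) ⬝ᵥ P₁ *ᵥ (w ∘ Sum.inl) := by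
          simpa [star_trivial] using hP₁.posSemidef.dotProduct_mulVec_nonneg (w ∘ Sum.inl)
        nlinarith [hpos, hnn]
      · have hpos := hP₁.dotProduct_mulVec_pos h1
        rw [star_trivial] at hpos
        have hnn : 0 ≤ (w ∘ Sum.inr) ⬝ᵥ (w ∘ Sum.inr) := by
          simpa [star_trivial] using dotProduct_self_star_nonneg (w ∘ Sum.inr)
        nlinarith [hpos, hnn]
  -- eigenvector
  obtain ⟨v, hv, hMv⟩ := exists_eigvec hz
  set x : (Fin (n+1) ⊕ Fin 1) → ℂ := v ∘ Sum.inl with hxdef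
  set y : Fin 2 → ℂ := v ∘ Sum.inr with hydef
  have hvelim : v = Sum.elim x y := (Sum.elim_comp_inl_inr v).symm
  rw [Matrix.fromBlocks_map, hvelim, Matrix.fromBlocks_mulVec] at hMv
  have hTop : ∀ i, ((Abar.map Complex.ofReal) *ᵥ x) i
      + ((Matrix.of fun (i : Fin (n+1) ⊕ Fin 1) (j : Fin 2) =>
          if j = 1 then -(kp * r) * (Pi.single (Sum.inr 0) 1 : Fin (n+1) ⊕ Fin 1 → ℝ) i
          else 0).map Complex.ofReal *ᵥ y) i = z * x i := by
    intro i
    have := congrFun hMv (Sum.inl i)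
    simpa using this
  have hBot : ∀ i, (((Matrix.of fun (i : Fin 2) (j : Fin (n+1) ⊕ Fin 1) =>
        if i = 1 then (Pi.single (Sum.inr 0) 1 : Fin (n+1) ⊕ Fin 1 → ℝ) j else 0).map
          Complex.ofReal) *ᵥ x) i
      + (((!![-(η * u), -(μ * kp / u); -(η * u), -(μ * kp / u)] :
          Matrix (Fin 2) (Fin 2) ℝ).map Complex.ofReal) *ᵥ y) i = z * y i := by
    intro i
    have := congrFun hMv (Sum.inr i)
    simpa only [Sum.elim_inr, Sum.elim_comp_inl, Sum.elim_comp_inr, Pi.add_apply, Pi.smul_apply, smul_eq_mul] using this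
  clear hMv
  -- abbreviations for scalars
  set ηu : ℂ := ((η * u : ℝ) : ℂ) with hηu
  set c : ℂ := ((μ * kp / u : ℝ) : ℂ) with hc
  set e' : (Fin (n+1) ⊕ Fin 1) → ℂ := Pi.single (Sum.inr 0) 1 with he'
  set κ : ℂ := ((-(kp * r) : ℝ) : ℂ) * y 1 with hκ
  -- the single vector over ℂ
  have hsingle : ∀ i, ((Pi.single (Sum.inr 0) 1 : Fin (n+1) ⊕ Fin 1 → ℝ) i : ℂ) = e' i := by
    intro i
    rw [he']
    by_cases h : i = Sum.inr 0
    · subst h; simp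
    · simp [Pi.single_apply, h]
  -- compute B *ᵥ y
  have hBv : ((Matrix.of fun (i : Fin (n+1) ⊕ Fin 1) (j : Fin 2) =>
      if j = 1 then -(kp * r) * (Pi.single (Sum.inr 0) 1 : Fin (n+1) ⊕ Fin 1 → ℝ) i
      else 0).map Complex.ofReal) *ᵥ y = κ • e' := by
    funext i
    simp only [mulVec, dotProduct, map_apply, Matrix.of_apply, Fin.sum_univ_two]
    norm_num
    rw [hκ, ← hsingle i]
    push_cast
    ring
  -- equation for the x-block
  have hA : (Abar.map Complex.ofReal) *ᵥ x = z • x - κ • e' := by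
    funext i
    have := hTop i
    rw [hBv] at this
    simp only [Pi.smul_apply, Pi.sub_apply, smul_eq_mul] at this ⊢
    linear_combination this
  -- map of matrices commutes with products etc.
  have hmapmul : ∀ (A B : Matrix (Fin (n+1) ⊕ Fin 1) (Fin (n+1) ⊕ Fin 1) ℝ),
      (A * B).map Complex.ofReal = (A.map Complex.ofReal) * (B.map Complex.ofReal) := by
    intro A B
    ext i j
    simp [Matrix.map_apply, Matrix.mul_apply]
  -- P over ℂ as a block matrix
  have hPmap : P.map Complex.ofReal = Matrix.fromBlocks (P₁.map Complex.ofReal) 0 0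
      (1 : Matrix (Fin 1) (Fin 1) ℂ) := by
    rw [hPdef, Matrix.fromBlocks_map]
    congr 1 <;> (ext i j; simp [Matrix.map_apply, Matrix.one_apply, apply_ite])
  -- e' as a Sum.elim
  have he'elim : e' = Sum.elim (0 : Fin (n+1) → ℂ) (fun _ => 1) := by
    funext i
    rcases i with i | j
    · simp [he', Pi.single_apply]
    · rw [Fin.eq_zero j]; simp [he']
  have hPe : (P.map Complex.ofReal) *ᵥ e' = e' := by
    rw [hPmap, he'elim, Matrix.fromBlocks_mulVec]
    simp
  have hPx : ((P.map Complex.ofReal) *ᵥ x) (Sum.inr 0) = x (Sum.inr 0) := by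
    have hx' : x = Sum.elim (x ∘ Sum.inl) (x ∘ Sum.inr) := (Sum.elim_comp_inl_inr x).symm
    rw [hPmap, hx', Matrix.fromBlocks_mulVec]
    simp
  have hstare' : star e' = e' := by
    funext i
    rcases i with i | j
    · simp [he', Pi.single_apply]
    · rw [Fin.eq_zero j]; simp [he']
  set s : ℂ := star x ⬝ᵥ ((P.map Complex.ofReal) *ᵥ x) with hs
  set xN : ℂ := x (Sum.inr 0) with hxN
  -- Lyapunov identity
  have hPA : star x ⬝ᵥ (((P * Abar).map Complex.ofReal) *ᵥ x)
      = z * s - κ * (starRingEnd ℂ) xN := by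
    rw [hmapmul, ← Matrix.mulVec_mulVec, hA, Matrix.mulVec_sub, Matrix.mulVec_smul,
      Matrix.mulVec_smul, hPe, dotProduct_sub, dotProduct_smul, dotProduct_smul, he',
      dotProduct_single]
    simp only [smul_eq_mul, mul_one, Pi.star_apply, RCLike.star_def]
    rfl
  have hAP : star x ⬝ᵥ (((Abarᵀ * P).map Complex.ofReal) *ᵥ x)
      = (starRingEnd ℂ) z * s - (starRingEnd ℂ) κ * xN := by
    rw [hmapmul, ← Matrix.mulVec_mulVec, Matrix.dotProduct_mulVec]
    have htr : (Abarᵀ).map Complex.ofReal = (Abar.map Complex.ofReal)ᵀ := by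
      ext i j; simp [Matrix.map_apply]
    rw [htr, Matrix.vecMul_transpose, mulVec_map_star, hA]
    rw [star_sub, star_smul, star_smul, hstare']
    rw [sub_dotProduct, smul_dotProduct, smul_dotProduct, he',
      single_dotProduct]
    simp only [smul_eq_mul, one_mul, RCLike.star_def]
    rw [hPx]
  have hQx : star x ⬝ᵥ ((Q.map Complex.ofReal) *ᵥ x)
      = (starRingEnd ℂ) κ * xN + κ * (starRingEnd ℂ) xN - (z + (starRingEnd ℂ) z) * s := by
    have hQmap : Q.map Complex.ofReal
        = -(((Abarᵀ * P).map Complex.ofReal) + ((P * Abar).map Complex.ofReal)) := by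
      rw [hQdef]
      ext i j
      simp [Matrix.map_apply]
    rw [hQmap, Matrix.neg_mulVec, Matrix.add_mulVec, dotProduct_neg, dotProduct_add, hPA, hAP]
    ring
  set W : ℝ := (y 1 * (starRingEnd ℂ) xN).re with hW
  have hfinal : (star x ⬝ᵥ ((Q.map Complex.ofReal) *ᵥ x)).re
      = -(2 * (kp * r)) * W - 2 * z.re * s.re := by
    rw [hQx]
    have hκW : (κ * (starRingEnd ℂ) xN) = ((-(kp*r) : ℝ) : ℂ) * (y 1 * (starRingEnd ℂ) xN) := by
      rw [hκ]; ring
    have hconjpair : (starRingEnd ℂ) κ * xN = (starRingEnd ℂ) (κ * (starRingEnd ℂ) xN) := by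
      simp
    rw [hconjpair, hκW]
    simp [Complex.add_re, Complex.sub_re, Complex.mul_re, Complex.conj_re, Complex.conj_im,
      Complex.add_im, hW]
    ring
  -- controller equations
  have hE2 : (z + ηu) * y 0 = -(c * y 1) := by
    have h := hBot 0
    simp only [mulVec, dotProduct, map_apply, Matrix.of_apply, Fin.sum_univ_two,
      Fintype.sum_sum_type] at h
    norm_num at h
    rw [hηu, hc]
    push_cast
    linear_combination -h
  have hE3 : xN = (z + c) * y 1 + ηu * y 0 := by
    have h := hBot 1
    simp only [mulVec, dotProduct, map_apply, Matrix.of_apply, Fin.sum_univ_two,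
      Fintype.sum_sum_type] at h
    norm_num [Pi.single_apply] at h
    simp only [reduceCtorEq, if_false, Complex.ofReal_zero, zero_mul,
      Finset.sum_const_zero, zero_add] at h
    rw [hxN, hηu, hc]
    push_cast
    linear_combination h
  -- the (z+ηu) factor is nonzero
  have hdne : z + ηu ≠ 0 := by
    intro h0
    have : (z + ηu).re = 0 := by rw [h0]; simp
    rw [hηu] at this
    simp at this
    nlinarith [mul_pos hη hu]
  -- conjugated controller equations
  have hdc : ((starRingEnd ℂ) z + ηu) * (starRingEnd ℂ) (y 0)
      = -(c * (starRingEnd ℂ) (y 1)) := by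
    have h := congrArg (starRingEnd ℂ) hE2
    simpa [_root_.map_mul, _root_.map_add, _root_.map_neg, hηu, hc, Complex.conj_ofReal] using h
  have hxc : (starRingEnd ℂ) xN = ((starRingEnd ℂ) z + c) * (starRingEnd ℂ) (y 1)
      + ηu * (starRingEnd ℂ) (y 0) := by
    have h := congrArg (starRingEnd ℂ) hE3
    simpa [_root_.map_mul, _root_.map_add, hηu, hc, Complex.conj_ofReal] using h
  have hmc1 : (z + ηu) * ((starRingEnd ℂ) z + ηu)
      = ((Complex.normSq (z + ηu) : ℝ) : ℂ) := by
    have h := Complex.mul_conj (z + ηu)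
    rw [map_add, hηu, Complex.conj_ofReal] at h
    rw [hηu]
    exact h
  have hmc2 : y 1 * (starRingEnd ℂ) (y 1) = ((Complex.normSq (y 1) : ℝ) : ℂ) :=
    Complex.mul_conj (y 1)
  have hprod : ((Complex.normSq (z + ηu) : ℝ) : ℂ) * (y 1 * (starRingEnd ℂ) xN)
      = ((Complex.normSq (y 1) : ℝ) : ℂ)
        * (((starRingEnd ℂ) z + c) * ((Complex.normSq (z + ηu) : ℝ) : ℂ)
            - ηu * c * (z + ηu)) := by
    linear_combination (((Complex.normSq (z + ηu) : ℝ) : ℂ) * y 1) * hxc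
      + (ηu * (z + ηu) * y 1) * hdc
      + ((((starRingEnd ℂ) z + c) * ((Complex.normSq (z + ηu) : ℝ) : ℂ)
          - ηu * c * (z + ηu)) * hmc2)
      + (-(ηu * y 1 * (starRingEnd ℂ) (y 0))) * hmc1
  have hWeq : Complex.normSq (z + ηu) * W
      = Complex.normSq (y 1) * ((z.re + μ * kp / u) * Complex.normSq (z + ηu)
          - (η * u) * (μ * kp / u) * (z.re + η * u)) := by
    have h := congrArg Complex.re hprod
    simp only [Complex.mul_re, Complex.sub_re, Complex.add_re, Complex.mul_im,
      Complex.sub_im, Complex.add_im, Complex.conj_re, Complex.conj_im,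
      Complex.ofReal_re, Complex.ofReal_im, hηu, hc] at h
    rw [hW]
    simp only [Complex.mul_re, Complex.conj_re, Complex.conj_im]
    linear_combination h
  have hnsd_eq : Complex.normSq (z + ηu) = (z.re + η * u) ^ 2 + z.im ^ 2 := by
    rw [hηu]
    simp [Complex.normSq_apply]
    ring
  have hzre_pos : 0 < z.re + η * u := by nlinarith [mul_pos hη hu]
  have hfac : 0 < Complex.normSq (z + ηu) := by
    rw [hnsd_eq]; nlinarith [sq_nonneg z.im, mul_pos hzre_pos hzre_pos]
  have hc0 : 0 < μ * kp / u := by positivity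
  have hbr : 0 ≤ (z.re + μ * kp / u) * Complex.normSq (z + ηu)
      - (η * u) * (μ * kp / u) * (z.re + η * u) := by
    rw [hnsd_eq]
    have t2 : 0 ≤ z.re ^ 2 + z.re * (η * u) + z.im ^ 2 := by
      nlinarith [sq_nonneg z.re, sq_nonneg z.im, mul_nonneg hre (mul_pos hη hu).le]
    nlinarith [mul_nonneg hre (sq_nonneg (z.re + η * u)), mul_nonneg hre (sq_nonneg z.im),
      mul_nonneg hc0.le t2]
  have hWnn : 0 ≤ W := by
    nlinarith [hWeq, hfac, mul_nonneg (Complex.normSq_nonneg (y 1)) hbr]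
  -- conclude x = 0
  have hsre : 0 ≤ s.re := re_quad_nonneg hP.posSemidef x
  have hx0 : x = 0 := by
    by_contra hx
    have hpos := re_quad_pos hQ hx
    rw [hfinal] at hpos
    nlinarith [mul_nonneg hre hsre, mul_nonneg (mul_pos hkp hr).le hWnn]
  have hκ0 : κ = 0 := by
    have h0 := congrFun hA (Sum.inr 0)
    rw [hx0] at h0
    simp [he', Matrix.mulVec_zero] at h0
    exact h0
  have hy1 : y 1 = 0 := by
    rw [hκ] at hκ0
    rcases mul_eq_zero.mp hκ0 with h | h
    · exfalso
      rw [Complex.ofReal_eq_zero] at h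
      nlinarith [mul_pos hkp hr]
    · exact h
  have hy0 : y 0 = 0 := by
    have h := hE2
    rw [hy1] at h
    simp only [mul_zero, neg_zero] at h
    rcases mul_eq_zero.mp h with h' | h'
    · exact absurd h' hdne
    · exact h'
  apply hv
  funext i
  rcases i with i | j
  · exact congrFun hx0 i
  · fin_cases j
    · exact hy0
    · exact hy1
end

section
/- Let n ≥ 1, let A ∈ ℝ^{n×n} be Metzler and Hurwitz stable, and let b₀ ∈ ℝⁿ with b₀ ≥ 0 entrywise. Define g₀ := −eₙᵀA⁻¹b₀ and g_n := −eₙᵀA⁻¹eₙ, and let μ satisfy 0 < μ < g₀. Then for all α > 0 and all k_p > 0, the (n+1)×(n+1) matrix [[Ā, −k_p μ eₙ], [(α(g₀ − μ)/(g_n μ k_p)) eₙᵀ, 0]] is Hurwitz stable, where Ā := A − ((g₀ − μ)/(g_n μ)) eₙeₙᵀ. -/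
open Matrix

set_option linter.unusedVariables false
set_option linter.unusedSectionVars false

open scoped NNReal

section NormStuff
variable {m : Type*} [Fintype m] [DecidableEq m]

attribute [local instance] Matrix.linftyOpNormedRing Matrix.linftyOpNormedAlgebra

lemma entry_abs_le_norm (M : Matrix m m ℝ) (i j : m) : |M i j| ≤ ‖M‖ := by
  rw [Matrix.linfty_opNorm_def]
  have h1 : ‖M i j‖₊ ≤ ∑ k, ‖M i k‖₊ :=
    Finset.single_le_sum (f := fun k => ‖M i k‖₊) (fun _ _ => zero_le) (Finset.mem_univ j)
  have h2 : (∑ k, ‖M i k‖₊) ≤ Finset.univ.sup fun i' => ∑ k, ‖M i' k‖₊ :=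
    Finset.le_sup (f := fun i' => ∑ k, ‖M i' k‖₊) (Finset.mem_univ i)
  calc |M i j| = ((‖M i j‖₊ : ℝ≥0) : ℝ) := by simp [Real.nnnorm_abs]
    _ ≤ _ := by exact_mod_cast h1.trans h2

lemma norm_le_sum_abs (M : Matrix m m ℝ) : ‖M‖ ≤ ∑ i, ∑ j, |M i j| := by
  rw [Matrix.linfty_opNorm_def]
  have : (Finset.univ.sup fun i => ∑ j, ‖M i j‖₊) ≤ ∑ i, ∑ j, ‖M i j‖₊ := by
    apply Finset.sup_le
    intro i _
    exact Finset.single_le_sum (f := fun i' => ∑ j, ‖M i' j‖₊)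
      (fun i' _ => zero_le) (Finset.mem_univ i)
  calc ((Finset.univ.sup fun i => ∑ j, ‖M i j‖₊ : ℝ≥0) : ℝ)
      ≤ ((∑ i, ∑ j, ‖M i j‖₊ : ℝ≥0) : ℝ) := by exact_mod_cast this
    _ = ∑ i, ∑ j, |M i j| := by
        push_cast
        refine Finset.sum_congr rfl fun i _ => Finset.sum_congr rfl fun j _ => ?_
        simp [Real.norm_eq_abs]

lemma pow_entry_nonneg {C : Matrix m m ℝ} (hC : ∀ i j, 0 ≤ C i j) :
    ∀ k, ∀ i j, 0 ≤ (C ^ k) i j := by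
  intro k
  induction k with
  | zero => intro i j; simp [Matrix.one_apply]; positivity
  | succ k ih =>
    intro i j
    rw [pow_succ, Matrix.mul_apply]
    exact Finset.sum_nonneg fun l _ => mul_nonneg (ih i l) (hC l j)

lemma inv_one_sub_entry_nonneg {C : Matrix m m ℝ} (hC : ∀ i j, 0 ≤ C i j)
    (hn : ‖C‖ < 1) : ∀ i j, 0 ≤ (1 - C)⁻¹ i j := by
  intro i j
  have hsum : HasSum (fun k : ℕ => C ^ k) (Ring.inverse (1 - C)) :=
    hasSum_geom_series_inverse C hn
  -- entry evaluation as a continuous additive map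
  let ev : Matrix m m ℝ →ₗ[ℝ] ℝ :=
    { toFun := fun M => M i j
      map_add' := fun _ _ => rfl
      map_smul' := fun _ _ => rfl }
  have hev : Continuous ev := by
    refine (ev.mkContinuous 1 ?_).continuous
    intro M
    exact (by simpa using entry_abs_le_norm M i j : |M i j| ≤ 1 * ‖M‖)
  have h2 : HasSum (fun k : ℕ => (C ^ k) i j) ((Ring.inverse (1 - C)) i j) :=
    hsum.map ev.toAddMonoidHom hev
  have h3 : 0 ≤ (Ring.inverse (1 - C)) i j :=
    h2.nonneg fun k => pow_entry_nonneg hC k i j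
  rwa [Matrix.nonsing_inv_eq_ringInverse]

/-- The resolvent-descent step: nonnegativity of `(t•1 - A)⁻¹` propagates down to `s`. -/
lemma step_lemma (A : Matrix m m ℝ) {s t : ℝ}
    (ht : IsUnit ((t • (1 : Matrix m m ℝ) - A)).det)
    (hst : s ≤ t)
    (hR : ∀ i j, 0 ≤ (t • (1 : Matrix m m ℝ) - A)⁻¹ i j)
    (hsmall : (t - s) * (∑ i, ∑ j, |(t • (1 : Matrix m m ℝ) - A)⁻¹ i j|) < 1) :
    ∀ i j, 0 ≤ (s • (1 : Matrix m m ℝ) - A)⁻¹ i j := by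
  set R := (t • (1 : Matrix m m ℝ) - A)⁻¹ with hRdef
  set C := (t - s) • R with hCdef
  have hCnn : ∀ i j, 0 ≤ C i j := fun i j =>
    mul_nonneg (by linarith) (hR i j)
  have hCnorm : ‖C‖ < 1 := by
    have h1 : ‖C‖ = |t - s| * ‖R‖ := by
      rw [hCdef, norm_smul, Real.norm_eq_abs]
    have h2 : ‖R‖ ≤ ∑ i, ∑ j, |R i j| := norm_le_sum_abs R
    have habs : |t - s| = t - s := abs_of_nonneg (by linarith)
    have hRnn : (0:ℝ) ≤ ‖R‖ := norm_nonneg _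
    rw [h1, habs]
    nlinarith [Finset.sum_nonneg (fun i (_ : i ∈ Finset.univ) =>
      Finset.sum_nonneg fun j (_ : j ∈ Finset.univ) => abs_nonneg (R i j))]
  have hfact : s • (1 : Matrix m m ℝ) - A = (t • (1 : Matrix m m ℝ) - A) * (1 - C) := by
    rw [Matrix.mul_sub, Matrix.mul_one, hCdef, Matrix.mul_smul,
      Matrix.mul_nonsing_inv _ ht]
    module
  have hinv : (s • (1 : Matrix m m ℝ) - A)⁻¹ = (1 - C)⁻¹ * R := by
    rw [hfact, Matrix.mul_inv_rev, hRdef]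
  intro i j
  rw [hinv, Matrix.mul_apply]
  exact Finset.sum_nonneg fun l _ =>
    mul_nonneg (inv_one_sub_entry_nonneg hCnn hCnorm i l) (hR l j)

lemma base_lemma (A : Matrix m m ℝ) (hoff : ∀ i j, i ≠ j → 0 ≤ A i j) :
    ∃ s₀ : ℝ, 0 ≤ s₀ ∧ ∀ i j, 0 ≤ (s₀ • (1 : Matrix m m ℝ) - A)⁻¹ i j := by
  set σ : ℝ := ∑ i, |A i i| with hσdef
  have hσ : 0 ≤ σ := Finset.sum_nonneg fun i _ => abs_nonneg _
  have hσi : ∀ i, |A i i| ≤ σ := fun i =>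
    Finset.single_le_sum (f := fun i => |A i i|) (fun _ _ => abs_nonneg _) (Finset.mem_univ i)
  set B : Matrix m m ℝ := A + σ • 1 with hBdef
  have hB : ∀ i j, 0 ≤ B i j := by
    intro i j
    by_cases h : i = j
    · subst h
      have h1 := hσi i
      have h2 := abs_nonneg (A i i)
      have h3 := neg_abs_le (A i i)
      simp only [hBdef, Matrix.add_apply, Matrix.smul_apply, Matrix.one_apply_eq, smul_eq_mul,
        mul_one]
      linarith
    · simpa [hBdef, Matrix.add_apply, Matrix.smul_apply, Matrix.one_apply, h] using hoff i j h
  set s₀ : ℝ := ‖B‖ + 1 with hs₀def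
  set τ : ℝ := s₀ + σ with hτdef
  have hnB : (0:ℝ) ≤ ‖B‖ := norm_nonneg _
  have hτpos : 0 < τ := by simp only [hτdef, hs₀def]; linarith
  have hτne : τ ≠ 0 := ne_of_gt hτpos
  refine ⟨s₀, by simp only [hs₀def]; linarith, ?_⟩
  set C : Matrix m m ℝ := τ⁻¹ • B with hCdef
  have hCnn : ∀ i j, 0 ≤ C i j := fun i j =>
    mul_nonneg (inv_nonneg.mpr hτpos.le) (hB i j)
  have hCnorm : ‖C‖ < 1 := by
    rw [hCdef, norm_smul, Real.norm_eq_abs, abs_of_nonneg (inv_nonneg.mpr hτpos.le)]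
    rw [inv_mul_lt_iff₀ hτpos, mul_one]
    simp only [hτdef, hs₀def]; linarith
  have hfact : s₀ • (1 : Matrix m m ℝ) - A = (τ • 1) * (1 - C) := by
    rw [Matrix.mul_sub, Matrix.mul_one, hCdef, Matrix.smul_mul, Matrix.one_mul, smul_smul,
      mul_inv_cancel₀ hτne, one_smul, hBdef, hτdef]
    module
  have hτinv : (τ • (1 : Matrix m m ℝ))⁻¹ = τ⁻¹ • 1 := by
    apply Matrix.inv_eq_right_inv
    rw [Matrix.smul_mul, Matrix.mul_smul, Matrix.one_mul, smul_smul, mul_inv_cancel₀ hτne,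
      one_smul]
  intro i j
  rw [hfact, Matrix.mul_inv_rev, hτinv, Matrix.mul_apply]
  refine Finset.sum_nonneg fun l _ => mul_nonneg (inv_one_sub_entry_nonneg hCnn hCnorm i l) ?_
  simp only [Matrix.smul_apply, Matrix.one_apply, smul_eq_mul]
  by_cases h : l = j <;> simp [h, inv_nonneg.mpr hτpos.le]

end NormStuff

section Descent
variable {m : Type*} [Fintype m] [DecidableEq m]

lemma neg_inv_entry_nonneg (A : Matrix m m ℝ) (hoff : ∀ i j, i ≠ j → 0 ≤ A i j)
    (hg : ∀ s : ℝ, 0 ≤ s → IsUnit ((s • (1 : Matrix m m ℝ) - A)).det) :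
    ∀ i j, 0 ≤ (-A)⁻¹ i j := by
  obtain ⟨s₀, hs₀, hbase⟩ := base_lemma A hoff
  set good : ℝ → Prop := fun s => ∀ i j, 0 ≤ (s • (1 : Matrix m m ℝ) - A)⁻¹ i j with hgooddef
  have hbase' : good s₀ := hbase
  set T : Set ℝ := {s | 0 ≤ s ∧ s ≤ s₀ ∧ ∀ u, s ≤ u → u ≤ s₀ → good u} with hTdef
  have hs₀T : s₀ ∈ T := ⟨hs₀, le_refl _, fun u h1 h2 => by
    have : u = s₀ := le_antisymm h2 h1
    rw [this]; exact hbase'⟩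
  have hbdd : BddBelow T := ⟨0, fun t ht => ht.1⟩
  have hTne : T.Nonempty := ⟨s₀, hs₀T⟩
  set μ₀ := sInf T with hμ₀def
  have hμ₀0 : 0 ≤ μ₀ := le_csInf hTne fun t ht => ht.1
  have hμ₀s₀ : μ₀ ≤ s₀ := csInf_le hbdd hs₀T
  have habove : ∀ u, μ₀ < u → u ≤ s₀ → good u := by
    intro u hu hus
    obtain ⟨t, htT, htu⟩ := exists_lt_of_csInf_lt hTne hu
    exact htT.2.2 u htu.le hus
  -- continuity input
  have hφ : ∀ i j, ∃ φ : ℝ → ℝ, ContinuousAt φ μ₀ ∧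
      (∀ s : ℝ, 0 ≤ s → (s • (1 : Matrix m m ℝ) - A)⁻¹ i j = φ s) := by
    intro i j
    have hF : Continuous fun s : ℝ => s • (1 : Matrix m m ℝ) - A :=
      (continuous_id.smul continuous_const).sub continuous_const
    refine ⟨fun s => ((s • (1 : Matrix m m ℝ) - A).det)⁻¹ *
        (s • (1 : Matrix m m ℝ) - A).adjugate i j, ?_, ?_⟩
    · have hdet : Continuous fun s : ℝ => (s • (1 : Matrix m m ℝ) - A).det := hF.matrix_det
      have hadj : Continuous fun s : ℝ => (s • (1 : Matrix m m ℝ) - A).adjugate i j := by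
        have := hF.matrix_adjugate
        exact ((continuous_apply j).comp ((continuous_apply i).comp this))
      have hdetne : ((μ₀ • (1 : Matrix m m ℝ) - A).det) ≠ 0 := (hg μ₀ hμ₀0).ne_zero
      exact (hdet.continuousAt.inv₀ hdetne).mul hadj.continuousAt
    · intro s _
      rw [Matrix.inv_def, Matrix.smul_apply, smul_eq_mul, Ring.inverse_eq_inv']
  have hgoodμ : good μ₀ := by
    rcases eq_or_lt_of_le hμ₀s₀ with h | h
    · rw [h]; exact hbase'
    · intro i j
      obtain ⟨φ, hφc, hφeq⟩ := hφ i j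
      rw [hφeq μ₀ hμ₀0]
      have htend : Filter.Tendsto φ (nhdsWithin μ₀ (Set.Ioi μ₀)) (nhds (φ μ₀)) :=
        hφc.continuousWithinAt
      refine ge_of_tendsto htend ?_
      have h1 : ∀ᶠ u in nhdsWithin μ₀ (Set.Ioi μ₀), u < s₀ :=
        Filter.Eventually.filter_mono nhdsWithin_le_nhds (Filter.Tendsto.eventually_lt_const h
          Filter.tendsto_id)
      have h2 : ∀ᶠ u in nhdsWithin μ₀ (Set.Ioi μ₀), μ₀ < u := eventually_mem_nhdsWithin
      filter_upwards [h1, h2] with u hu1 hu2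
      rw [← hφeq u (le_of_lt (lt_of_le_of_lt hμ₀0 hu2))]
      exact habove u hu2 hu1.le i j
  have hμ₀eq : μ₀ = 0 := by
    by_contra hne
    have hμpos : 0 < μ₀ := lt_of_le_of_ne hμ₀0 (Ne.symm hne)
    set S : ℝ := ∑ i, ∑ j, |(μ₀ • (1 : Matrix m m ℝ) - A)⁻¹ i j| with hSdef
    have hSnn : 0 ≤ S := Finset.sum_nonneg fun i _ => Finset.sum_nonneg fun j _ => abs_nonneg _
    set s₁ : ℝ := max 0 (μ₀ - 1 / (S + 1)) with hs₁def
    have hs₁lt : s₁ < μ₀ := by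
      rw [hs₁def, max_lt_iff]
      constructor
      · exact hμpos
      · have : 0 < 1 / (S + 1) := by positivity
        linarith
    have hs₁T : s₁ ∈ T := by
      refine ⟨le_max_left _ _, le_trans hs₁lt.le hμ₀s₀, fun u hu1 hu2 => ?_⟩
      rcases lt_trichotomy u μ₀ with h | h | h
      · -- use step lemma from μ₀
        have hsmall : (μ₀ - u) * S < 1 := by
          have hub : μ₀ - u ≤ 1 / (S + 1) := by
            have : μ₀ - 1 / (S + 1) ≤ s₁ := le_max_right _ _
            linarith
          have h1 : (μ₀ - u) * S ≤ (1 / (S + 1)) * S := by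
            apply mul_le_mul_of_nonneg_right hub hSnn
          have h2 : (1 / (S + 1)) * S < 1 := by
            rw [div_mul_eq_mul_div, one_mul, div_lt_one (by linarith)]
            linarith
          linarith
        exact step_lemma A (hg μ₀ hμ₀0) h.le hgoodμ hsmall
      · rw [h]; exact hgoodμ
      · exact habove u h hu2
    have := csInf_le hbdd hs₁T
    rw [← hμ₀def] at this
    linarith
  have : good 0 := by rw [← hμ₀eq]; exact hgoodμ
  intro i j
  have h0 := this i j
  rwa [zero_smul, zero_sub] at h0


lemma mulVec_entries_pos {K : Matrix m m ℝ} (hK : ∀ i j, 0 ≤ K i j) (hdet : IsUnit K.det)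
    {u : m → ℝ} (hu : ∀ i, 0 < u i) : ∀ i, 0 < (K *ᵥ u) i := by
  intro i
  have hrow : ∃ j, K i j ≠ 0 := by
    by_contra h
    push_neg at h
    have : K.det = 0 := Matrix.det_eq_zero_of_row_eq_zero i h
    exact hdet.ne_zero this
  obtain ⟨j₀, hj₀⟩ := hrow
  simp only [Matrix.mulVec, dotProduct]
  refine Finset.sum_pos' (fun j _ => mul_nonneg (hK i j) (hu j).le) ?_
  exact ⟨j₀, Finset.mem_univ _, mul_pos (lt_of_le_of_ne (hK i j₀) (Ne.symm hj₀)) (hu j₀)⟩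

lemma neg_inv_diag_pos {A : Matrix m m ℝ} (hMetz : ∀ i j, i ≠ j → 0 ≤ A i j)
    (hu : IsUnit ((-A).det)) (hK : ∀ i j, 0 ≤ (-A)⁻¹ i j) (l : m) : 0 < (-A)⁻¹ l l := by
  set K := (-A)⁻¹ with hKdef
  have hAK : (-A) * K = 1 := Matrix.mul_nonsing_inv _ hu
  have h1 : ∑ j, (-A) l j * K j l = 1 := by
    have h := congrFun (congrFun hAK l) l
    rw [Matrix.mul_apply] at h
    simpa [Matrix.one_apply] using h
  rcases lt_or_eq_of_le (hK l l) with h | h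
  · exact h
  · exfalso
    have h2 : ∑ j, (-A) l j * K j l ≤ 0 := by
      refine Finset.sum_nonpos fun j _ => ?_
      rcases eq_or_ne j l with hj | hj
      · subst hj; rw [← h, mul_zero]
      · have h3 : (-A) l j ≤ 0 := by
          simp only [Matrix.neg_apply, neg_nonpos]
          exact hMetz l j (Ne.symm hj)
        exact mul_nonpos_of_nonpos_of_nonneg h3 (hK j l)
    linarith

lemma quad_key {M : Matrix m m ℝ} (hsym : ∀ i j, M i j = M j i)
    (hoff : ∀ i j, i ≠ j → 0 ≤ M i j) {v : m → ℝ} (hv : ∀ i, 0 < v i) (x : m → ℝ) :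
    ∑ i, ∑ j, M i j * x i * x j ≤ ∑ i, (v i * (M *ᵥ v) i) * (x i / v i)^2 := by
  set y := fun i => x i / v i with hy
  have hxy : ∀ i, x i = v i * y i := fun i => by
    simp only [hy]; rw [eq_comm, mul_comm, div_mul_cancel₀ _ (hv i).ne']
  have h1 : ∑ i, ∑ j, M i j * x i * x j
      ≤ ∑ i, ∑ j, (M i j * v i * v j) * ((y i)^2 + (y j)^2) / 2 := by
    refine Finset.sum_le_sum fun i _ => Finset.sum_le_sum fun j _ => ?_
    rw [hxy i, hxy j]
    rcases eq_or_ne i j with h | h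
    · subst h; apply le_of_eq; ring
    · have hB : 0 ≤ M i j * v i * v j :=
        mul_nonneg (mul_nonneg (hoff i j h) (hv i).le) (hv j).le
      nlinarith [sq_nonneg (y i - y j)]
  have h2 : ∑ i, ∑ j, (M i j * v i * v j) * ((y i)^2 + (y j)^2) / 2
      = ∑ i, (v i * (M *ᵥ v) i) * (y i)^2 := by
    have e1 : ∀ i j, (M i j * v i * v j) * ((y i)^2 + (y j)^2) / 2
        = (M i j * v i * v j) * (y i)^2/2 + (M i j * v i * v j) * (y j)^2/2 := fun i j => by ring
    simp_rw [e1, Finset.sum_add_distrib]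
    have e2 : ∑ i, ∑ j, (M i j * v i * v j) * (y j)^2/2
        = ∑ i, ∑ j, (M i j * v i * v j) * (y i)^2/2 := by
      rw [Finset.sum_comm]
      refine Finset.sum_congr rfl fun i _ => Finset.sum_congr rfl fun j _ => ?_
      rw [hsym j i]; ring
    rw [e2]
    have e3 : ∀ i, ∑ j, (M i j * v i * v j) * (y i)^2/2 = (v i * (M *ᵥ v) i) * (y i)^2/2 := by
      intro i
      simp only [Matrix.mulVec, dotProduct, Finset.mul_sum, Finset.sum_mul,
        Finset.sum_div]
      refine Finset.sum_congr rfl fun j _ => by ring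
    simp_rw [e3]
    rw [← Finset.sum_add_distrib]
    refine Finset.sum_congr rfl fun i _ => by ring
  exact h1.trans (le_of_eq h2)

lemma quad_nonpos {M : Matrix m m ℝ} (hsym : ∀ i j, M i j = M j i)
    (hoff : ∀ i j, i ≠ j → 0 ≤ M i j) {v : m → ℝ} (hv : ∀ i, 0 < v i)
    (hMv : ∀ i, (M *ᵥ v) i < 0) (x : m → ℝ) :
    ∑ i, ∑ j, M i j * x i * x j ≤ 0 := by
  refine (quad_key hsym hoff hv x).trans (Finset.sum_nonpos fun i _ => ?_)
  exact mul_nonpos_of_nonpos_of_nonneg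
    (mul_nonpos_of_nonneg_of_nonpos (hv i).le (hMv i).le) (sq_nonneg _)

lemma quad_neg {M : Matrix m m ℝ} (hsym : ∀ i j, M i j = M j i)
    (hoff : ∀ i j, i ≠ j → 0 ≤ M i j) {v : m → ℝ} (hv : ∀ i, 0 < v i)
    (hMv : ∀ i, (M *ᵥ v) i < 0) {x : m → ℝ} {i₀ : m} (hx : x i₀ ≠ 0) :
    ∑ i, ∑ j, M i j * x i * x j < 0 := by
  refine lt_of_le_of_lt (quad_key hsym hoff hv x) ?_
  have h1 : ∀ i ∈ Finset.univ, (v i * (M *ᵥ v) i) * (x i / v i)^2 ≤ 0 := fun i _ =>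
    mul_nonpos_of_nonpos_of_nonneg
      (mul_nonpos_of_nonneg_of_nonpos (hv i).le (hMv i).le) (sq_nonneg _)
  have h2 : (v i₀ * (M *ᵥ v) i₀) * (x i₀ / v i₀)^2 < 0 := by
    apply mul_neg_of_neg_of_pos
    · exact mul_neg_of_pos_of_neg (hv i₀) (hMv i₀)
    · have hne : x i₀ / v i₀ ≠ 0 := div_ne_zero hx (hv i₀).ne'
      exact lt_of_le_of_ne (sq_nonneg _) (Ne.symm (pow_ne_zero 2 hne))
  calc ∑ i, (v i * (M *ᵥ v) i) * (x i / v i)^2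
      < ∑ i : m, (0:ℝ) := by
        refine Finset.sum_lt_sum h1 ⟨i₀, Finset.mem_univ _, by simpa using h2⟩
    _ = 0 := by simp


lemma map_resolvent (A : Matrix m m ℝ) (s : ℝ) :
    ((s • (1 : Matrix m m ℝ) - A)).map Complex.ofReal
      = (s : ℂ) • (1 : Matrix m m ℂ) - A.map Complex.ofReal := by
  ext i j
  simp only [Matrix.map_apply, Matrix.sub_apply, Matrix.smul_apply, Matrix.one_apply,
    smul_eq_mul]
  push_cast [apply_ite (Complex.ofReal)]
  rfl

lemma hurwitz_isUnit {A : Matrix m m ℝ} (hHur : HurwitzStable A) :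
    ∀ s : ℝ, 0 ≤ s → IsUnit ((s • (1 : Matrix m m ℝ) - A)).det := by
  intro s hs
  rw [isUnit_iff_ne_zero]
  intro hdet
  have hdetC : ((s : ℂ) • (1 : Matrix m m ℂ) - A.map Complex.ofReal).det = 0 := by
    have h2 : ((s • (1 : Matrix m m ℝ) - A).map Complex.ofReal).det
        = Complex.ofRealHom ((s • (1 : Matrix m m ℝ) - A)).det := by
      rw [RingHom.map_det, RingHom.mapMatrix_apply]
      rfl
    rw [← map_resolvent, h2, hdet]
    simp
  have hmem : (s : ℂ) ∈ spectrum ℂ (A.map Complex.ofReal) := by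
    rw [spectrum.mem_iff]
    rw [Algebra.algebraMap_eq_smul_one]
    rw [Matrix.isUnit_iff_isUnit_det, hdetC]
    exact not_isUnit_zero
  have := hHur _ hmem
  rw [Complex.ofReal_re] at this
  linarith

end Descent

lemma re_real_mul_conj (r : ℝ) (a b : ℂ) :
    ((r : ℂ) * ((starRingEnd ℂ) a * b)).re = r * (a.re * b.re + a.im * b.im) := by
  simp [Complex.mul_re, Complex.conj_re, Complex.conj_im]
  try ring

/-- Structural stability of the p-type exponential integral controller (stable case):
the Jacobian of the closed-loop system at the positive equilibrium is Hurwitz stable for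
all controller parameters α, k_p > 0 whenever 0 < μ < g₀. -/
theorem stmt18 (n : ℕ) (A : Matrix (Fin (n+1)) (Fin (n+1)) ℝ)
    (hMetz : Metzler A) (hHur : HurwitzStable A)
    (b₀ : Fin (n+1) → ℝ) (hb₀ : ∀ i, 0 ≤ b₀ i)
    (g₀ gn μ : ℝ)
    (hg₀ : g₀ = -((A⁻¹ *ᵥ b₀) (Fin.last n)))
    (hgn : gn = -(A⁻¹ (Fin.last n) (Fin.last n)))
    (hμ : 0 < μ) (hμg : μ < g₀) :
    ∀ α kp : ℝ, 0 < α → 0 < kp →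
      HurwitzStable (Matrix.fromBlocks
        (A - ((g₀ - μ) / (gn * μ)) • Matrix.vecMulVec
          (Pi.single (Fin.last n) 1) (Pi.single (Fin.last n) 1))
        (Matrix.of fun (i : Fin (n+1)) (_ : Fin 1) =>
          -(kp * μ) * (Pi.single (Fin.last n) 1 : Fin (n+1) → ℝ) i)
        (Matrix.of fun (_ : Fin 1) (j : Fin (n+1)) =>
          (α * (g₀ - μ) / (gn * μ * kp)) * (Pi.single (Fin.last n) 1 : Fin (n+1) → ℝ) j)
        (0 : Matrix (Fin 1) (Fin 1) ℝ)) := by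
  intro α kp hα hkp
  set l : Fin (n+1) := Fin.last n with hldef
  set e : Fin (n+1) → ℝ := Pi.single l 1 with hedef
  have hg := hurwitz_isUnit hHur
  have huA : IsUnit ((-A).det) := by
    have h := hg 0 le_rfl
    rwa [zero_smul, zero_sub] at h
  set K : Matrix (Fin (n+1)) (Fin (n+1)) ℝ := (-A)⁻¹ with hKdef
  have hK : ∀ i j, 0 ≤ K i j := neg_inv_entry_nonneg A hMetz hg
  have hnegA : (-A) * K = 1 := Matrix.mul_nonsing_inv _ huA
  have hKnegA : K * (-A) = 1 := Matrix.nonsing_inv_mul _ huA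
  have hAinv : A⁻¹ = -K := by
    apply Matrix.inv_eq_right_inv
    rw [Matrix.mul_neg, ← Matrix.neg_mul]
    exact hnegA
  have hgnK : gn = K l l := by rw [hgn, hAinv]; simp
  have hgnpos : 0 < gn := by rw [hgnK]; exact neg_inv_diag_pos hMetz huA hK l
  have hKdet : IsUnit K.det := (-A).isUnit_nonsing_inv_det huA
  -- positive vectors
  set ones : Fin (n+1) → ℝ := fun _ => 1 with honesdef
  set v : Fin (n+1) → ℝ := K *ᵥ ones with hvdef
  have hv : ∀ i, 0 < v i := mulVec_entries_pos hK hKdet fun _ => one_pos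
  set w : Fin (n+1) → ℝ := Kᵀ *ᵥ ones with hwdef
  have hKt : ∀ i j, 0 ≤ Kᵀ i j := fun i j => hK j i
  have hKtdet : IsUnit (Kᵀ).det := by rwa [Matrix.det_transpose]
  have hw : ∀ i, 0 < w i := mulVec_entries_pos hKt hKtdet fun _ => one_pos
  have hAv : A *ᵥ v = -ones := by
    rw [hvdef, Matrix.mulVec_mulVec]
    have h1 : A * K = -1 := by
      have := hnegA
      rw [Matrix.neg_mul] at this
      linear_combination (norm := abel) -this
    rw [h1, Matrix.neg_mulVec, Matrix.one_mulVec]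
  have hAtw : Aᵀ *ᵥ w = -ones := by
    rw [hwdef, Matrix.mulVec_mulVec]
    have h1 : K * A = -1 := by
      have := hKnegA
      rw [Matrix.mul_neg] at this
      linear_combination (norm := abel) -this
    have h2 : Aᵀ * Kᵀ = -1 := by
      rw [← Matrix.transpose_mul, h1]
      simp
    rw [h2, Matrix.neg_mulVec, Matrix.one_mulVec]
  -- the closed-loop matrices
  set c : ℝ := (g₀ - μ) / (gn * μ) with hcdef
  have hc : 0 < c := div_pos (by linarith) (mul_pos hgnpos hμ)
  set Abar : Matrix (Fin (n+1)) (Fin (n+1)) ℝ := A - c • Matrix.vecMulVec e e with hAbardef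
  have hAbar_apply : ∀ i j, Abar i j = A i j - c * (e i * e j) := by
    intro i j
    simp [hAbardef, Matrix.sub_apply, Matrix.vecMulVec_apply, mul_assoc]
  have he_off : ∀ i j : Fin (n+1), i ≠ j → e i * e j = 0 := by
    intro i j hij
    rcases eq_or_ne i l with h | h
    · subst h
      rw [hedef, Pi.single_eq_of_ne (Ne.symm hij) 1, mul_zero]
    · rw [hedef, Pi.single_eq_of_ne h 1, zero_mul]
  have hoffAbar : ∀ i j, i ≠ j → 0 ≤ Abar i j := by
    intro i j hij
    rw [hAbar_apply, he_off i j hij, mul_zero, sub_zero]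
    exact hMetz i j hij
  have hsingle_sum : ∀ u : Fin (n+1) → ℝ, ∑ j, e j * u j = u l := by
    intro u
    rw [hedef]
    simp [Pi.single_apply, ite_mul]
  have hAbarv : ∀ i, (Abar *ᵥ v) i < 0 := by
    intro i
    have h1 : (Abar *ᵥ v) i = -1 - c * (e i * v l) := by
      rw [hAbardef, Matrix.sub_mulVec, Matrix.smul_mulVec]
      have h2 : (Matrix.vecMulVec e e *ᵥ v) i = e i * v l := by
        simp only [Matrix.mulVec, dotProduct, Matrix.vecMulVec_apply]
        rw [← hsingle_sum (fun j => v j)]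
        rw [Finset.mul_sum]
        exact Finset.sum_congr rfl fun j _ => by ring
      simp only [Pi.sub_apply, Pi.smul_apply, smul_eq_mul, h2, hAv, Pi.neg_apply, honesdef]
      try ring
    rw [h1]
    have h3 : 0 ≤ e i * v l := by
      rcases eq_or_ne i l with h | h
      · subst h; rw [hedef, Pi.single_eq_same]; simpa using (hv l).le
      · rw [hedef, Pi.single_eq_of_ne h 1, zero_mul]
    nlinarith
  have hAbartw : ∀ i, (Abarᵀ *ᵥ w) i < 0 := by
    intro i
    have ht : Abarᵀ = Aᵀ - c • Matrix.vecMulVec e e := by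
      rw [hAbardef, Matrix.transpose_sub, Matrix.transpose_smul]
      congr 1
      ext i j
      simp [Matrix.vecMulVec_apply, mul_comm]
    have h1 : (Abarᵀ *ᵥ w) i = -1 - c * (e i * w l) := by
      rw [ht, Matrix.sub_mulVec, Matrix.smul_mulVec]
      have h2 : (Matrix.vecMulVec e e *ᵥ w) i = e i * w l := by
        simp only [Matrix.mulVec, dotProduct, Matrix.vecMulVec_apply]
        rw [← hsingle_sum (fun j => w j)]
        rw [Finset.mul_sum]
        exact Finset.sum_congr rfl fun j _ => by ring
      simp only [Pi.sub_apply, Pi.smul_apply, smul_eq_mul, h2, hAtw, Pi.neg_apply, honesdef]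
      try ring
    rw [h1]
    have h3 : 0 ≤ e i * w l := by
      rcases eq_or_ne i l with h | h
      · subst h; rw [hedef, Pi.single_eq_same]; simpa using (hw l).le
      · rw [hedef, Pi.single_eq_of_ne h 1, zero_mul]
    nlinarith
  -- Lyapunov data
  set p : Fin (n+1) → ℝ := fun i => w i / v i with hpdef
  have hp : ∀ i, 0 < p i := fun i => div_pos (hw i) (hv i)
  have hpv : ∀ i, p i * v i = w i := fun i => div_mul_cancel₀ _ (hv i).ne'
  set N : Matrix (Fin (n+1)) (Fin (n+1)) ℝ :=
    Matrix.of (fun i j => p i * Abar i j + p j * Abar j i) with hNdef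
  have hNsym : ∀ i j, N i j = N j i := fun i j => by simp [hNdef]; ring
  have hNoff : ∀ i j, i ≠ j → 0 ≤ N i j := by
    intro i j hij
    have := hoffAbar i j hij
    have := hoffAbar j i (Ne.symm hij)
    simp only [hNdef, Matrix.of_apply]
    have h1 := (hp i).le
    have h2 := (hp j).le
    positivity
  have hNv : ∀ i, (N *ᵥ v) i < 0 := by
    intro i
    have h1 : (N *ᵥ v) i = p i * (Abar *ᵥ v) i + (Abarᵀ *ᵥ w) i := by
      simp only [Matrix.mulVec, dotProduct, hNdef, Matrix.of_apply,
        Matrix.transpose_apply]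
      rw [Finset.mul_sum, ← Finset.sum_add_distrib]
      refine Finset.sum_congr rfl fun j _ => ?_
      rw [add_mul]
      congr 1
      · ring
      · rw [mul_comm (p j), mul_assoc, hpv j, mul_comm]
    rw [h1]
    have := hAbarv i
    have := hAbartw i
    nlinarith [hp i]
  -- controller gains
  set β : ℝ := kp * μ with hβdef
  have hβ : 0 < β := mul_pos hkp hμ
  set γ : ℝ := α * (g₀ - μ) / (gn * μ * kp) with hγdef
  have hγ : 0 < γ := by
    apply div_pos (mul_pos hα (by linarith))
    positivity
  set c' : ℝ := β * p l / γ with hc'def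
  have hc' : 0 < c' := div_pos (mul_pos hβ (hp l)) hγ
  have hc'γ : c' * γ = β * p l := div_mul_cancel₀ _ hγ.ne'
  -- spectrum argument
  intro z hz
  set W := (Matrix.fromBlocks Abar
      (Matrix.of fun (i : Fin (n+1)) (_ : Fin 1) => -β * e i)
      (Matrix.of fun (_ : Fin 1) (j : Fin (n+1)) => γ * e j)
      (0 : Matrix (Fin 1) (Fin 1) ℝ)).map Complex.ofReal with hWdef
  rw [spectrum.mem_iff] at hz
  have hdet0 : (z • (1 : Matrix (Fin (n+1) ⊕ Fin 1) (Fin (n+1) ⊕ Fin 1) ℂ) - W).det = 0 := by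
    by_contra hdet
    apply hz
    rw [Algebra.algebraMap_eq_smul_one, Matrix.isUnit_iff_isUnit_det]
    exact isUnit_iff_ne_zero.mpr hdet
  obtain ⟨V, hVne, hVeq⟩ := (Matrix.exists_mulVec_eq_zero_iff).mpr hdet0
  have hWV : W *ᵥ V = z • V := by
    rw [Matrix.sub_mulVec] at hVeq
    have h2 : (z • (1 : Matrix (Fin (n+1) ⊕ Fin 1) (Fin (n+1) ⊕ Fin 1) ℂ)) *ᵥ V = z • V := by
      rw [Matrix.smul_mulVec, Matrix.one_mulVec]
    rw [h2] at hVeq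
    exact (sub_eq_zero.mp hVeq).symm
  set x : Fin (n+1) → ℂ := fun i => V (Sum.inl i) with hxdef
  set zc : ℂ := V (Sum.inr 0) with hzcdef
  have hrow1 : ∀ i, (∑ j, ((Abar i j : ℝ) : ℂ) * x j) + ((-β * e i : ℝ) : ℂ) * zc = z * x i := by
    intro i
    have h := congrFun hWV (Sum.inl i)
    simp only [Matrix.mulVec, dotProduct, Fintype.sum_sum_type, hWdef,
      Matrix.map_apply, Matrix.fromBlocks_apply₁₁, Matrix.fromBlocks_apply₁₂,
      Matrix.of_apply, Pi.smul_apply, smul_eq_mul, Fin.sum_univ_one] at h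
    exact h
  have hrow2 : (γ : ℂ) * x l = z * zc := by
    have h := congrFun hWV (Sum.inr 0)
    simp only [Matrix.mulVec, dotProduct, Fintype.sum_sum_type, hWdef,
      Matrix.map_apply, Matrix.fromBlocks_apply₂₁, Matrix.fromBlocks_apply₂₂,
      Matrix.of_apply, Pi.smul_apply, smul_eq_mul, Fin.sum_univ_one, Matrix.zero_apply,
      Complex.ofReal_zero, zero_mul, add_zero] at h
    have hsum : ∑ j, ((γ * e j : ℝ) : ℂ) * x j = (γ : ℂ) * x l := by
      push_cast
      rw [hedef]
      simp [Pi.single_apply, apply_ite, ite_mul, mul_ite, Finset.sum_ite_eq', mul_assoc]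
    rw [hsum] at h
    exact h
  by_cases hx0 : ∀ i, x i = 0
  · exfalso
    have hl := hrow1 l
    have h1 : ∑ j, ((Abar l j : ℝ) : ℂ) * x j = 0 :=
      Finset.sum_eq_zero fun j _ => by rw [hx0 j, mul_zero]
    have hel : ((-β * e l : ℝ) : ℂ) = ((-β : ℝ) : ℂ) := by
      rw [hedef, Pi.single_eq_same, mul_one]
    rw [h1, hx0 l, mul_zero, zero_add, hel] at hl
    have hne : ((-β : ℝ) : ℂ) ≠ 0 := by
      rw [Complex.ofReal_ne_zero]
      exact neg_ne_zero.mpr hβ.ne'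
    have hzc0 : zc = 0 := (mul_eq_zero.mp hl).resolve_left hne
    apply hVne
    funext k
    cases k with
    | inl i => exact hx0 i
    | inr j =>
      have hj : j = 0 := Subsingleton.elim j 0
      rw [hj]
      exact hzc0
  · push_neg at hx0
    obtain ⟨i₀, hi₀⟩ := hx0
    set a : Fin (n+1) → ℝ := fun i => (x i).re with hadef
    set b : Fin (n+1) → ℝ := fun i => (x i).im with hbdef
    set Q : ℝ := (∑ i, p i * Complex.normSq (x i)) + c' * Complex.normSq zc with hQdef
    have hQpos : 0 < Q := by
      have h1 : 0 < ∑ i, p i * Complex.normSq (x i) := by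
        apply Finset.sum_pos' (fun i _ => mul_nonneg (hp i).le (Complex.normSq_nonneg _))
        exact ⟨i₀, Finset.mem_univ _, mul_pos (hp i₀) (Complex.normSq_pos.mpr hi₀)⟩
      have h2 : 0 ≤ c' * Complex.normSq zc := mul_nonneg hc'.le (Complex.normSq_nonneg _)
      rw [hQdef]; linarith
    set E : ℂ := (∑ i, (p i : ℂ) * ((starRingEnd ℂ) (x i) * (z * x i)))
        + (c' : ℂ) * ((starRingEnd ℂ) zc * (z * zc)) with hEdef
    have hE1 : E.re = z.re * Q := by
      have h1 : ∀ u : ℂ, ∀ r : ℝ, (r : ℂ) * ((starRingEnd ℂ) u * (z * u))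
          = z * ((r * Complex.normSq u : ℝ) : ℂ) := by
        intro u r
        have : ((Complex.normSq u : ℝ) : ℂ) = (starRingEnd ℂ) u * u :=
          Complex.normSq_eq_conj_mul_self
        push_cast
        rw [this]
        ring
      have h2 : E = z * (Q : ℂ) := by
        rw [hEdef, hQdef]
        simp_rw [h1]
        rw [← Finset.mul_sum, ← mul_add, ← Complex.ofReal_sum, ← Complex.ofReal_add]
      rw [h2]
      simp [Complex.mul_re]
    have hE2 : E.re = ∑ i, ∑ j, (p i * Abar i j) * (a i * a j + b i * b j) := by
      have h0 : E = (∑ i, (p i : ℂ) * ((starRingEnd ℂ) (x i)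
            * ((∑ j, ((Abar i j : ℝ) : ℂ) * x j) + ((-β * e i : ℝ) : ℂ) * zc)))
          + (c' : ℂ) * ((starRingEnd ℂ) zc * ((γ : ℂ) * x l)) := by
        rw [hEdef]
        simp_rw [← hrow1, ← hrow2]
      have hterm : ∀ i, ((p i : ℂ) * ((starRingEnd ℂ) (x i)
            * ((∑ j, ((Abar i j : ℝ) : ℂ) * x j) + ((-β * e i : ℝ) : ℂ) * zc))).re
          = (∑ j, (p i * Abar i j) * (a i * a j + b i * b j))
            + (p i * (-β * e i)) * (a i * zc.re + b i * zc.im) := by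
        intro i
        have hexp : (p i : ℂ) * ((starRingEnd ℂ) (x i)
              * ((∑ j, ((Abar i j : ℝ) : ℂ) * x j) + ((-β * e i : ℝ) : ℂ) * zc))
            = (∑ j, ((p i * Abar i j : ℝ) : ℂ) * ((starRingEnd ℂ) (x i) * x j))
              + ((p i * (-β * e i) : ℝ) : ℂ) * ((starRingEnd ℂ) (x i) * zc) := by
          rw [mul_add, mul_add]
          congr 1
          · rw [Finset.mul_sum, Finset.mul_sum]
            refine Finset.sum_congr rfl fun j _ => ?_
            push_cast
            ring
          · push_cast
            ring
        rw [hexp, Complex.add_re, Complex.re_sum]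
        congr 1
        · exact Finset.sum_congr rfl fun j _ => re_real_mul_conj _ _ _
        · exact re_real_mul_conj _ _ _
      rw [h0, Complex.add_re, Complex.re_sum]
      simp_rw [hterm]
      rw [Finset.sum_add_distrib]
      have hcross : ∑ i, (p i * (-β * e i)) * (a i * zc.re + b i * zc.im)
          = (p l * -β) * (a l * zc.re + b l * zc.im) := by
        rw [← Finset.sum_subset (Finset.subset_univ {l})]
        · rw [Finset.sum_singleton]
          have : e l = 1 := by rw [hedef]; exact Pi.single_eq_same l 1
          rw [this]; ring
        · intro i _ hi
          have : e i = 0 := by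
            rw [hedef]
            exact Pi.single_eq_of_ne (by simpa using hi) 1
          rw [this]; ring
      have hlast : ((c' : ℂ) * ((starRingEnd ℂ) zc * ((γ : ℂ) * x l))).re
          = (β * p l) * (zc.re * a l + zc.im * b l) := by
        have h3 : (c' : ℂ) * ((starRingEnd ℂ) zc * ((γ : ℂ) * x l))
            = ((c' * γ : ℝ) : ℂ) * ((starRingEnd ℂ) zc * x l) := by
          push_cast
          ring
        rw [h3, re_real_mul_conj, hc'γ]
      rw [hcross, hlast]
      ring
    -- quadratic form negativity
    have hhalf : ∀ u : Fin (n+1) → ℝ,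
        2 * (∑ i, ∑ j, (p i * Abar i j) * (u i * u j)) = ∑ i, ∑ j, N i j * u i * u j := by
      intro u
      have hswap : ∑ i, ∑ j, (p j * Abar j i) * (u i * u j)
          = ∑ i, ∑ j, (p i * Abar i j) * (u i * u j) := by
        rw [Finset.sum_comm]
        exact Finset.sum_congr rfl fun i _ => Finset.sum_congr rfl fun j _ => by ring
      have hcomb : ∑ i, ∑ j, N i j * u i * u j
          = (∑ i, ∑ j, (p i * Abar i j) * (u i * u j))
            + ∑ i, ∑ j, (p j * Abar j i) * (u i * u j) := by
        rw [← Finset.sum_add_distrib]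
        refine Finset.sum_congr rfl fun i _ => ?_
        rw [← Finset.sum_add_distrib]
        refine Finset.sum_congr rfl fun j _ => ?_
        simp only [hNdef, Matrix.of_apply]
        ring
      rw [hcomb, hswap]
      ring
    have hSsplit : ∑ i, ∑ j, (p i * Abar i j) * (a i * a j + b i * b j)
        = (∑ i, ∑ j, (p i * Abar i j) * (a i * a j))
          + ∑ i, ∑ j, (p i * Abar i j) * (b i * b j) := by
      rw [← Finset.sum_add_distrib]
      refine Finset.sum_congr rfl fun i _ => ?_
      rw [← Finset.sum_add_distrib]
      exact Finset.sum_congr rfl fun j _ => by ring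
    have hiab : a i₀ ≠ 0 ∨ b i₀ ≠ 0 := by
      by_contra h
      push_neg at h
      exact hi₀ (Complex.ext h.1 h.2)
    have hSneg : ∑ i, ∑ j, (p i * Abar i j) * (a i * a j + b i * b j) < 0 := by
      have hqa := hhalf a
      have hqb := hhalf b
      rcases hiab with h | h
      · have h1 : ∑ i, ∑ j, N i j * a i * a j < 0 := quad_neg hNsym hNoff hv hNv h
        have h2 : ∑ i, ∑ j, N i j * b i * b j ≤ 0 := quad_nonpos hNsym hNoff hv hNv b
        rw [hSsplit]
        linarith [hqa, hqb]
      · have h1 : ∑ i, ∑ j, N i j * b i * b j < 0 := quad_neg hNsym hNoff hv hNv h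
        have h2 : ∑ i, ∑ j, N i j * a i * a j ≤ 0 := quad_nonpos hNsym hNoff hv hNv a
        rw [hSsplit]
        linarith [hqa, hqb]
    have hfin : z.re * Q < 0 := by
      rw [← hE1, hE2]
      exact hSneg
    by_contra hcon
    push_neg at hcon
    exact absurd hfin (not_lt.mpr (mul_nonneg hcon hQpos.le))
end
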